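/- arXiv:math/0511431 — 8 statements merged into one kernel-verified Lean document; each statement's English description precedes it below -/
import Mathlib

section
/- For 0 ≤ k ≤ n, the total number of chains of length k appearing in the chain decompositions of all elements of IS_n equals [n]_k * |IS_{n-k}|, where [n]_k = n(n-1)...(n-k+1) is the falling factorial and |IS_m| = sum over j of binom(m,j)^2 * j!. -/
def IsPInj (n : ℕ) (f : Fin n → Option (Fin n)) : Prop :=
  ∀ a b c, f a = some c → f b = some c → a = b

instance (n : ℕ) : DecidablePred (IsPInj n) := fun _ =>
  inferInstanceAs (Decidable (∀ _ _ _, _ → _ → _))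

/-- The symmetric inverse semigroup `IS_n`: partial injective maps on `{1,…,n}`. -/
def PInj (n : ℕ) := {f : Fin n → Option (Fin n) // IsPInj n f}

instance (n : ℕ) : Fintype (PInj n) := Subtype.fintype _

/-- `iterMap n f k x` is `f^k(x)` as a partial map. -/
def iterMap (n : ℕ) (f : Fin n → Option (Fin n)) : ℕ → Fin n → Option (Fin n)
  | 0, x => some x
  | k + 1, x => (f x).bind (iterMap n f k)

/-- Size of the domain of a partial injection. -/
def domCard (n : ℕ) (α : PInj n) : ℕ :=
  (Finset.univ.filter (fun x => α.val x ≠ none)).card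

/-- `α` is nilpotent: some positive power is the empty map. -/
def Nilpotent (n : ℕ) (α : PInj n) : Prop :=
  ∃ k, 0 < k ∧ ∀ x, iterMap n α.val k x = none

/-- `|IS_m| = ∑_j binom(m,j)^2 j!`. -/
def cardIS (m : ℕ) : ℕ := ∑ j ∈ Finset.range (m + 1), (m.choose j) ^ 2 * j.factorial


/-- `x : Fin k → Fin n` enumerates a chain of length `k` of `α`: a maximal path
`x 0 → x 1 → ⋯ → x (k-1)` in the action graph. -/
def IsChainOf (n k : ℕ) (α : PInj n) (x : Fin k → Fin n) : Prop :=
  Function.Injective x ∧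
  (∀ i j : Fin k, (j : ℕ) = (i : ℕ) + 1 → α.val (x i) = some (x j)) ∧
  (∀ i : Fin k, (i : ℕ) = k - 1 → α.val (x i) = none) ∧
  (∀ i : Fin k, (i : ℕ) = 0 → ∀ y, α.val y ≠ some (x i))

namespace Stmt4Aux

variable {n k : ℕ}

def te (e : Fin k ↪ Fin n) : Finset (Fin n) := (Finset.univ.map e)ᶜ

lemma card_te (e : Fin k ↪ Fin n) : (te e).card = n - k := by
  simp [te, Finset.card_compl]

lemma e_not_mem_te (e : Fin k ↪ Fin n) (i : Fin k) : e i ∉ te e := by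
  simp [te]

lemma not_mem_te (e : Fin k ↪ Fin n) {z : Fin n} (hz : z ∉ te e) : z ∈ Set.range e := by
  simp [te, Finset.mem_map] at hz
  obtain ⟨a, ha⟩ := hz
  exact ⟨a, ha⟩

noncomputable def oi (e : Fin k ↪ Fin n) : Fin (n - k) ≃o {x // x ∈ te e} :=
  (te e).orderIsoOfFin (card_te e)

lemma oi_mem (e : Fin k ↪ Fin n) (i : Fin (n - k)) : ((oi e i : Fin n)) ∈ te e := (oi e i).2

lemma oi_coe_inj (e : Fin k ↪ Fin n) : Function.Injective (fun i => ((oi e i : Fin n))) :=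
  fun a b hab => (oi e).injective (Subtype.ext hab)

lemma oi_symm_coe (e : Fin k ↪ Fin n) (j : Fin (n - k)) (h : ((oi e j : Fin n)) ∈ te e) :
    (oi e).symm ⟨((oi e j : Fin n)), h⟩ = j := by
  have h1 : (⟨((oi e j : Fin n)), h⟩ : {x // x ∈ te e}) = oi e j := rfl
  rw [h1]
  exact (oi e).symm_apply_apply j

noncomputable def idx (e : Fin k ↪ Fin n) {z : Fin n} (hz : z ∉ te e) : Fin k :=
  (Equiv.ofInjective e e.injective).symm ⟨z, not_mem_te e hz⟩

lemma idx_apply (e : Fin k ↪ Fin n) (i : Fin k) (hz : e i ∉ te e) : idx e hz = i := by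
  have h1 : (⟨e i, not_mem_te e hz⟩ : Set.range e) = ⟨e i, ⟨i, rfl⟩⟩ := rfl
  rw [idx, h1, Equiv.ofInjective_symm_apply]

lemma apply_idx (e : Fin k ↪ Fin n) {z : Fin n} (hz : z ∉ te e) : e (idx e hz) = z := by
  have := Equiv.apply_ofInjective_symm e.injective ⟨z, not_mem_te e hz⟩
  simpa [idx] using this

noncomputable def A (e : Fin k ↪ Fin n) (β : PInj (n - k)) : Fin n → Option (Fin n) :=
  fun z =>
    if hz : z ∈ te e then (β.1 ((oi e).symm ⟨z, hz⟩)).map (fun j => ((oi e j : Fin n)))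
    else if h2 : ((idx e hz : ℕ)) + 1 < k then some (e ⟨(idx e hz : ℕ) + 1, h2⟩) else none

lemma A_pinj (e : Fin k ↪ Fin n) (β : PInj (n - k)) : IsPInj n (A e β) := by
  intro a b c ha hb
  by_cases hza : a ∈ te e <;> by_cases hzb : b ∈ te e
  · rw [A, dif_pos hza] at ha
    rw [A, dif_pos hzb] at hb
    rcases Option.map_eq_some_iff.1 ha with ⟨ja, hja, hja2⟩
    rcases Option.map_eq_some_iff.1 hb with ⟨jb, hjb, hjb2⟩
    have hj : ja = jb := oi_coe_inj e (hja2.trans hjb2.symm)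
    subst hj
    have h3 := β.2 _ _ _ hja hjb
    have h4 := (oi e).symm.injective h3
    exact Subtype.ext_iff.1 h4
  · exfalso
    rw [A, dif_pos hza] at ha
    rw [A, dif_neg hzb] at hb
    rcases Option.map_eq_some_iff.1 ha with ⟨ja, _, hja2⟩
    split_ifs at hb with h2
    · have hc := Option.some.inj hb
      have hmem : c ∈ te e := hja2 ▸ oi_mem e ja
      rw [← hc] at hmem
      exact e_not_mem_te e _ hmem
  · exfalso
    rw [A, dif_neg hza] at ha
    rw [A, dif_pos hzb] at hb
    rcases Option.map_eq_some_iff.1 hb with ⟨jb, _, hjb2⟩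
    split_ifs at ha with h2
    · have hc := Option.some.inj ha
      have hmem : c ∈ te e := hjb2 ▸ oi_mem e jb
      rw [← hc] at hmem
      exact e_not_mem_te e _ hmem
  · rw [A, dif_neg hza] at ha
    rw [A, dif_neg hzb] at hb
    split_ifs at ha with h2
    · split_ifs at hb with h3
      · have hc := (Option.some.inj ha).trans (Option.some.inj hb).symm
        have h4 := e.injective hc
        have h5 : ((idx e hza : ℕ)) = ((idx e hzb : ℕ)) := by
          have := congrArg Fin.val h4
          simpa using this
        have h6 : idx e hza = idx e hzb := Fin.ext h5
        calc a = e (idx e hza) := (apply_idx e hza).symm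
          _ = e (idx e hzb) := by rw [h6]
          _ = b := apply_idx e hzb
  
lemma A_chain (e : Fin k ↪ Fin n) (β : PInj (n - k)) :
    IsChainOf n k ⟨A e β, A_pinj e β⟩ (fun i => e i) := by
  refine ⟨e.injective, ?_, ?_, ?_⟩
  · intro i j hij
    have h2 : (i : ℕ) + 1 < k := hij ▸ j.2
    show A e β (e i) = some (e j)
    rw [A, dif_neg (e_not_mem_te e i)]
    simp only [idx_apply]
    rw [dif_pos h2]
    congr 1
    exact congrArg e (Fin.ext hij.symm)
  · intro i hi
    show A e β (e i) = none
    rw [A, dif_neg (e_not_mem_te e i)]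
    simp only [idx_apply]
    have hk : 0 < k := i.pos
    have h2 : ¬ ((i : ℕ) + 1 < k) := by omega
    rw [dif_neg h2]
  · intro i hi y hy
    have hy' : A e β y = some (e i) := hy
    clear hy
    by_cases hzy : y ∈ te e
    · rw [A, dif_pos hzy] at hy'
      rcases Option.map_eq_some_iff.1 hy' with ⟨j, _, hj2⟩
      exact e_not_mem_te e i (hj2 ▸ oi_mem e j)
    · rw [A, dif_neg hzy] at hy'
      split_ifs at hy' with h2
      · have h3 := e.injective (Option.some.inj hy')
        have h4 : ((idx e hzy : ℕ)) + 1 = (i : ℕ) := by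
          have := congrArg Fin.val h3
          simpa using this
        omega

noncomputable def B (α : PInj n) (e : Fin k ↪ Fin n) : Fin (n - k) → Option (Fin (n - k)) :=
  fun i => (α.1 ((oi e i : Fin n))).bind fun y =>
    if hy : y ∈ te e then some ((oi e).symm ⟨y, hy⟩) else none

lemma B_pinj (α : PInj n) (e : Fin k ↪ Fin n) : IsPInj (n - k) (B α e) := by
  intro a b c ha hb
  rw [B] at ha hb
  rcases Option.bind_eq_some_iff.1 ha with ⟨ya, hya, hya2⟩
  rcases Option.bind_eq_some_iff.1 hb with ⟨yb, hyb, hyb2⟩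
  split_ifs at hya2 with h1
  · split_ifs at hyb2 with h2
    · have e1 := Option.some.inj hya2
      have e2 := Option.some.inj hyb2
      have h3 : ya = yb := by
        have := (oi e).symm.injective (e1.trans e2.symm)
        exact Subtype.ext_iff.1 this
      subst h3
      have h4 := α.2 _ _ _ hya hyb
      exact oi_coe_inj e h4

lemma BA (e : Fin k ↪ Fin n) (β : PInj (n - k)) :
    B ⟨A e β, A_pinj e β⟩ e = β.1 := by
  funext i
  unfold B
  show (A e β ((oi e i : Fin n))).bind _ = β.1 i
  rw [A, dif_pos (oi_mem e i), oi_symm_coe]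
  cases hb : β.1 i with
  | none => simp
  | some j =>
    simp only [Option.map_some, Option.bind_some]
    rw [dif_pos (oi_mem e j), oi_symm_coe]

lemma AB (α : PInj n) (x : Fin k → Fin n) (hc : IsChainOf n k α x) :
    A ⟨x, hc.1⟩ ⟨B α ⟨x, hc.1⟩, B_pinj α ⟨x, hc.1⟩⟩ = α.1 := by
  obtain ⟨hinj, hsucc, hlast, hfirst⟩ := hc
  set e : Fin k ↪ Fin n := ⟨x, hinj⟩ with he
  funext z
  by_cases hz : z ∈ te e
  · unfold A; rw [dif_pos hz]
    have hz2 : ((oi e ((oi e).symm ⟨z, hz⟩) : Fin n)) = z := by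
      rw [(oi e).apply_symm_apply]
    show (B α e ((oi e).symm ⟨z, hz⟩)).map _ = α.1 z
    rw [B, hz2]
    cases hαz : α.1 z with
    | none => simp
    | some y =>
      have hy : y ∈ te e := by
        by_contra hy
        obtain ⟨j, hj⟩ := not_mem_te e hy
        have hj' : x j = y := hj
        by_cases hj0 : (j : ℕ) = 0
        · exact hfirst j hj0 z (hj' ▸ hαz)
        · have hjpos : 0 < (j : ℕ) := Nat.pos_of_ne_zero hj0
          have hjlt : (j : ℕ) - 1 < k := by omega
          have h5 := hsucc ⟨(j : ℕ) - 1, hjlt⟩ j (show (j : ℕ) = (j : ℕ) - 1 + 1 by omega)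
          have h6 : x ⟨(j : ℕ) - 1, hjlt⟩ = z := α.2 _ _ _ h5 (hj' ▸ hαz)
          rw [← h6] at hz
          exact e_not_mem_te e ⟨(j : ℕ) - 1, hjlt⟩ hz
      simp only [Option.bind_some]
      rw [dif_pos hy]
      simp only [Option.map_some]
      congr 1
      exact congrArg Subtype.val ((oi e).apply_symm_apply ⟨y, hy⟩)
  · unfold A; rw [dif_neg hz]
    have hez : e (idx e hz) = z := apply_idx e hz
    by_cases h2 : ((idx e hz : ℕ)) + 1 < k
    · rw [dif_pos h2]
      have h5 := hsucc (idx e hz) ⟨(idx e hz : ℕ) + 1, h2⟩ rfl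
      rw [show x (idx e hz) = z from hez] at h5
      exact h5.symm
    · rw [dif_neg h2]
      have hklt := (idx e hz).2
      have h5 := hlast (idx e hz) (by omega)
      rw [show x (idx e hz) = z from hez] at h5
      exact h5.symm

noncomputable def chainEquiv (n k : ℕ) :
    {p : PInj n × (Fin k → Fin n) // IsChainOf n k p.1 p.2} ≃ (Fin k ↪ Fin n) × PInj (n - k) where
  toFun p := ⟨⟨p.1.2, p.2.1⟩, ⟨B p.1.1 ⟨p.1.2, p.2.1⟩, B_pinj _ _⟩⟩
  invFun q := ⟨(⟨A q.1 q.2, A_pinj _ _⟩, fun i => q.1 i), A_chain q.1 q.2⟩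
  left_inv p := by
    obtain ⟨⟨α, x⟩, hc⟩ := p
    apply Subtype.ext
    refine Prod.ext ?_ ?_
    · exact Subtype.ext (AB α x hc)
    · rfl
  right_inv q := by
    obtain ⟨e, β⟩ := q
    refine Prod.ext ?_ ?_
    · rfl
    · exact Subtype.ext (BA e β)

end Stmt4Aux

theorem stmt4 (n k : ℕ) (h : k ≤ n) :
    Set.ncard {p : PInj n × (Fin k → Fin n) | IsChainOf n k p.1 p.2}
      = n.descFactorial k * Nat.card (PInj (n - k)) := by

  have h1 : {p : PInj n × (Fin k → Fin n) | IsChainOf n k p.1 p.2}.ncard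
      = Nat.card ((Fin k ↪ Fin n) × PInj (n - k)) := by
    rw [← Nat.card_coe_set_eq]
    exact Nat.card_congr (Stmt4Aux.chainEquiv n k)
  rw [h1, Nat.card_prod, Nat.card_eq_fintype_card, Fintype.card_embedding_eq,
    Fintype.card_fin, Fintype.card_fin]
end

section
/- For 1 ≤ k ≤ n, the total number of cycles of length k appearing in the chain decompositions of all elements of IS_n equals (1/k) * [n]_k * |IS_{n-k}|. -/
/-- `x : Fin k → Fin n` enumerates a cycle of length `k` of `α` starting at its
minimal point (so each cycle is enumerated exactly once). -/
def IsCycleOf (n k : ℕ) (α : PInj n) (x : Fin k → Fin n) : Prop :=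
  Function.Injective x ∧
  (∀ i j : Fin k, (j : ℕ) = ((i : ℕ) + 1) % k → α.val (x i) = some (x j)) ∧
  (∀ i j : Fin k, (i : ℕ) = 0 → x i ≤ x j)

/-! ### Auxiliary material for `stmt5` -/

open scoped Classical

namespace Stmt5Aux

lemma add_mod_inj {k a b : ℕ} (i : ℕ) (ha : a < k) (hb : b < k)
    (h : (a + i) % k = (b + i) % k) : a = b := by
  have h2 : a ≡ b [MOD k] := Nat.ModEq.add_right_cancel' i h
  rwa [Nat.ModEq, Nat.mod_eq_of_lt ha, Nat.mod_eq_of_lt hb] at h2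

lemma eq_k_of_mod0 {k a : ℕ} (hk : 0 < k) (ha : 1 ≤ a) (hab : a < 2 * k)
    (h : a % k = 0) : a = k := by
  obtain ⟨c, hc⟩ := Nat.dvd_of_mod_eq_zero h
  have hc2 : c < 2 := by
    by_contra h'
    push_neg at h'
    have := Nat.mul_le_mul_left k h'
    omega
  rcases c with _ | _ | c <;> omega

lemma mod0_cases {k a : ℕ} (hk : 0 < k) (hab : a < 2 * k) (h : a % k = 0) :
    a = 0 ∨ a = k := by
  rcases Nat.eq_zero_or_pos a with h0 | h0
  · exact Or.inl h0
  · exact Or.inr (eq_k_of_mod0 hk h0 hab h)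

lemma cancel_mod {k i : ℕ} (hi : i < k) : ((k - i) % k + i) % k = 0 := by
  rw [Nat.mod_add_mod]
  have h : k - i + i = k := by omega
  rw [h, Nat.mod_self]

/-- Partial injections on an arbitrary type. -/
def PMap (β : Type*) := {f : β → Option β // ∀ a b c, f a = some c → f b = some c → a = b}

def pmapCongr {β γ : Type*} (e : β ≃ γ) : PMap β ≃ PMap γ where
  toFun f := ⟨fun c => (f.val (e.symm c)).map e, by
    intro a b c ha hb
    simp only [Option.map_eq_some_iff] at ha hb
    obtain ⟨za, hza, hza2⟩ := ha
    obtain ⟨zb, hzb, hzb2⟩ := hb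
    have : za = zb := e.injective (hza2.trans hzb2.symm)
    subst this
    have := f.prop _ _ _ hza hzb
    exact e.symm.injective this⟩
  invFun f := ⟨fun c => (f.val (e c)).map e.symm, by
    intro a b c ha hb
    simp only [Option.map_eq_some_iff] at ha hb
    obtain ⟨za, hza, hza2⟩ := ha
    obtain ⟨zb, hzb, hzb2⟩ := hb
    have : za = zb := e.symm.injective (hza2.trans hzb2.symm)
    subst this
    have := f.prop _ _ _ hza hzb
    exact e.injective this⟩
  left_inv f := by
    apply Subtype.ext; funext b
    simp [Option.map_map, Function.comp_def]
  right_inv f := by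
    apply Subtype.ext; funext b
    simp [Option.map_map, Function.comp_def]

def pmapFinEquiv (m : ℕ) : PMap (Fin m) ≃ PInj m := Equiv.refl _

variable {n k : ℕ}

/-- The cycle condition without injectivity/minimality. -/
def CycPred (n k : ℕ) (α : PInj n) (x : Fin k → Fin n) : Prop :=
  ∀ i j : Fin k, (j : ℕ) = ((i : ℕ) + 1) % k → α.val (x i) = some (x j)

def nxt (hk : 0 < k) (i : Fin k) : Fin k := ⟨((i : ℕ) + 1) % k, Nat.mod_lt _ hk⟩

lemma cyc_apply (hk : 0 < k) {α : PInj n} {x : Fin k → Fin n} (hα : CycPred n k α x)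
    (i : Fin k) : α.val (x i) = some (x (nxt hk i)) := hα i _ rfl

lemma nxt_inj (hk : 0 < k) : Function.Injective (nxt hk) := by
  intro a b h
  have := congrArg Fin.val h
  exact Fin.ext (add_mod_inj 1 a.isLt b.isLt this)

lemma mem_range_of (hk : 0 < k) {α : PInj n} {x : Fin k → Fin n}
    (hα : CycPred n k α x) {z w : Fin n} (hzw : α.val z = some w)
    (hw : w ∈ Set.range x) : z ∈ Set.range x := by
  obtain ⟨j, rfl⟩ := hw
  set i : Fin k := ⟨((j : ℕ) + (k - 1)) % k, Nat.mod_lt _ hk⟩ with hi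
  have hnxt : nxt hk i = j := by
    apply Fin.ext
    show (((j : ℕ) + (k - 1)) % k + 1) % k = (j : ℕ)
    rw [Nat.mod_add_mod]
    have : (j : ℕ) + (k - 1) + 1 = (j : ℕ) + k := by omega
    rw [this, Nat.add_mod_right, Nat.mod_eq_of_lt j.isLt]
  have h2 : α.val (x i) = some (x j) := by rw [cyc_apply hk hα, hnxt]
  exact ⟨i, α.prop _ _ _ h2 hzw⟩

section Fiber

variable (hk : 0 < k) (x : Fin k → Fin n) (hx : Function.Injective x)

/-- Partial injections outside the range of `x`. -/
abbrev Compl (x : Fin k → Fin n) := {z : Fin n // z ∉ Set.range x}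

noncomputable def fiberEquiv : {α : PInj n // CycPred n k α x} ≃ PMap (Compl x) where
  toFun α := ⟨fun c => (α.val.val c.val).bind
      (fun z => if h : z ∈ Set.range x then none else some ⟨z, h⟩), by
    intro a b c ha hb
    simp only [Option.bind_eq_some_iff] at ha hb
    obtain ⟨za, hza, hza2⟩ := ha
    obtain ⟨zb, hzb, hzb2⟩ := hb
    split_ifs at hza2 with h1
    split_ifs at hzb2 with h2
    have hza3 : za = c.val := congrArg Subtype.val (Option.some_injective _ hza2)
    have hzb3 : zb = c.val := congrArg Subtype.val (Option.some_injective _ hzb2)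
    subst hza3
    rw [hzb3] at hzb
    exact Subtype.ext (α.val.prop _ _ _ hza hzb)⟩
  invFun g := ⟨⟨fun z =>
      if h : z ∈ Set.range x then some (x (nxt hk h.choose)) else
        (g.val ⟨z, h⟩).map Subtype.val, by
    intro a b c ha hb
    dsimp only at ha hb
    split_ifs at ha hb with h1 h2 h2
    · -- both in range
      have hc1 : x (nxt hk h1.choose) = c := Option.some_injective _ ha
      have hc2 : x (nxt hk h2.choose) = c := Option.some_injective _ hb
      have : h1.choose = h2.choose := nxt_inj hk (hx (hc1.trans hc2.symm))
      rw [← h1.choose_spec, ← h2.choose_spec, this]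
    · -- a in range, b not
      exfalso
      have hc1 : x (nxt hk h1.choose) = c := Option.some_injective _ ha
      simp only [Option.map_eq_some_iff] at hb
      obtain ⟨d, _, hd2⟩ := hb
      exact d.prop (by rw [hd2]; exact ⟨_, hc1⟩)
    · -- b in range, a not
      exfalso
      have hc2 : x (nxt hk h2.choose) = c := Option.some_injective _ hb
      simp only [Option.map_eq_some_iff] at ha
      obtain ⟨d, _, hd2⟩ := ha
      exact d.prop (by rw [hd2]; exact ⟨_, hc2⟩)
    · -- both not in range
      simp only [Option.map_eq_some_iff] at ha hb
      obtain ⟨da, hda, hda2⟩ := ha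
      obtain ⟨db, hdb, hdb2⟩ := hb
      have : da = db := Subtype.ext (hda2.trans hdb2.symm)
      subst this
      have := g.prop _ _ _ hda hdb
      exact congrArg Subtype.val this⟩, by
    intro i j hj
    have hji : j = nxt hk i := Fin.ext hj
    show dite _ _ _ = _
    rw [dif_pos ⟨i, rfl⟩]
    have hch : (⟨i, rfl⟩ : ∃ i', x i' = x i).choose = i :=
      hx (⟨i, rfl⟩ : ∃ i', x i' = x i).choose_spec
    rw [hch, hji]⟩
  left_inv α := by
    apply Subtype.ext; apply Subtype.ext; funext z
    show dite _ _ _ = α.val.val z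
    split_ifs with h
    · have hch : x h.choose = z := h.choose_spec
      conv_rhs => rw [← hch]
      rw [cyc_apply hk α.prop]
    · show (((α.val.val z).bind _).map _) = α.val.val z
      cases hw : α.val.val z with
      | none => simp
      | some w =>
        have hwr : w ∉ Set.range x := fun hwr => h (mem_range_of hk α.prop hw hwr)
        simp only [Set.mem_range] at hwr
        simp [hwr]
  right_inv g := by
    apply Subtype.ext; funext c
    show ((dite _ _ _ : Option (Fin n)).bind _) = g.val c
    rw [dif_neg c.prop]
    have : (⟨c.val, c.prop⟩ : Compl x) = c := rfl
    rw [this]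
    cases hgc : g.val c with
    | none => simp
    | some d =>
      have hd := d.prop
      simp only [Set.mem_range, not_exists] at hd
      simp [hd]

end Fiber

lemma card_compl (x : Fin k → Fin n) (hx : Function.Injective x) :
    Fintype.card (Compl x) = n - k := by
  have h1 : Fintype.card {z : Fin n // z ∈ Set.range x} = k := by
    rw [Fintype.card_congr (Equiv.subtypeEquiv (Equiv.refl _) (fun z => Iff.rfl))]
    calc Fintype.card (Set.range x) = Fintype.card (Fin k) :=
          Set.card_range_of_injective hx
      _ = k := Fintype.card_fin k
  rw [Fintype.card_subtype_compl, h1, Fintype.card_fin]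

lemma fiber_card (hk : 0 < k) (x : Fin k → Fin n) (hx : Function.Injective x) :
    Nat.card {α : PInj n // CycPred n k α x} = Nat.card (PInj (n - k)) := by
  have e : Compl x ≃ Fin (n - k) := Fintype.equivFinOfCardEq (card_compl x hx)
  exact Nat.card_congr ((fiberEquiv hk x hx).trans ((pmapCongr e).trans (pmapFinEquiv _)))

section Rot

variable (hk : 0 < k)

def rot (x : Fin k → Fin n) (i : Fin k) : Fin k → Fin n :=
  fun j => x ⟨((j : ℕ) + (i : ℕ)) % k, Nat.mod_lt _ hk⟩

lemma rot_inj {x : Fin k → Fin n} (hx : Function.Injective x) (i : Fin k) :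
    Function.Injective (rot hk x i) := by
  intro a b h
  have := hx h
  have := congrArg Fin.val this
  exact Fin.ext (add_mod_inj (i : ℕ) a.isLt b.isLt this)

lemma rot_cyc {α : PInj n} {x : Fin k → Fin n} (hα : CycPred n k α x) (i : Fin k) :
    CycPred n k α (rot hk x i) := by
  intro a b hb
  apply hα
  show ((b : ℕ) + (i : ℕ)) % k = (((a : ℕ) + (i : ℕ)) % k + 1) % k
  rw [hb, Nat.mod_add_mod, Nat.mod_add_mod, Nat.add_right_comm]

end Rot

end Stmt5Aux

open Stmt5Aux in
theorem stmt5 (n k : ℕ) (h1 : 1 ≤ k) (h2 : k ≤ n) :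
    k * Set.ncard {p : PInj n × (Fin k → Fin n) | IsCycleOf n k p.1 p.2}
      = n.descFactorial k * Nat.card (PInj (n - k)) := by
  classical
  have hk : 0 < k := h1
  -- T : pairs with the cycle condition but no minimality
  set T := {p : PInj n × (Fin k → Fin n) //
      Function.Injective p.2 ∧ CycPred n k p.1 p.2} with hT
  -- R : pairs with minimality
  set R := {p : PInj n × (Fin k → Fin n) // IsCycleOf n k p.1 p.2} with hR
  have key1 : Nat.card T = n.descFactorial k * Nat.card (PInj (n - k)) := by
    have eqv : T ≃ Σ x : {x : Fin k → Fin n // Function.Injective x},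
        {α : PInj n // CycPred n k α x.val} :=
      { toFun := fun p => ⟨⟨p.val.2, p.prop.1⟩, ⟨p.val.1, p.prop.2⟩⟩
        invFun := fun q => ⟨(q.2.val, q.1.val), ⟨q.1.prop, q.2.prop⟩⟩
        left_inv := fun p => rfl
        right_inv := fun q => rfl }
    rw [Nat.card_congr eqv, Nat.card_eq_fintype_card, Fintype.card_sigma]
    have hfib : ∀ x : {x : Fin k → Fin n // Function.Injective x},
        Fintype.card {α : PInj n // CycPred n k α x.val} = Nat.card (PInj (n - k)) := by
      intro x
      rw [← Nat.card_eq_fintype_card]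
      exact fiber_card hk x.val x.prop
    rw [Finset.sum_congr rfl (fun x _ => hfib x), Finset.sum_const, Finset.card_univ,
      smul_eq_mul]
    congr 1
    rw [Fintype.card_congr (Equiv.subtypeInjectiveEquivEmbedding (Fin k) (Fin n)),
      Fintype.card_embedding_eq, Fintype.card_fin, Fintype.card_fin]
  have key2 : Nat.card T = Nat.card R * k := by
    have hφp : ∀ (q : R × Fin k), Function.Injective (rot hk q.1.val.2 q.2) ∧
        CycPred n k q.1.val.1 (rot hk q.1.val.2 q.2) :=
      fun q => ⟨rot_inj hk q.1.prop.1 q.2, rot_cyc hk q.1.prop.2.1 q.2⟩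
    set φ : R × Fin k → T := fun q => ⟨(q.1.val.1, rot hk q.1.val.2 q.2), hφp q⟩ with hφdef
    have hbij : Function.Bijective φ := by
      constructor
      · rintro ⟨⟨⟨α, x⟩, hx⟩, i⟩ ⟨⟨⟨α', x'⟩, hx'⟩, i'⟩ h
        have h' := congrArg Subtype.val h
        have hα : α = α' := congrArg Prod.fst h'
        have hrot : rot hk x i = rot hk x' i' := congrArg Prod.snd h'
        have hev : ∀ a : ℕ, (ha : a < k) →
            x ⟨(a + i.val) % k, Nat.mod_lt _ hk⟩ = x' ⟨(a + i'.val) % k, Nat.mod_lt _ hk⟩ :=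
          fun a ha => congrFun hrot ⟨a, ha⟩
        have e1 := hev ((k - i.val) % k) (Nat.mod_lt _ hk)
        simp only [cancel_mod i.isLt] at e1
        have e2 := hev ((k - i'.val) % k) (Nat.mod_lt _ hk)
        simp only [cancel_mod i'.isLt] at e2
        have hle1 : x' ⟨0, hk⟩ ≤ x' ⟨((k - i.val) % k + i'.val) % k, Nat.mod_lt _ hk⟩ :=
          hx'.2.2 _ _ rfl
        have hle2 : x ⟨0, hk⟩ ≤ x ⟨((k - i'.val) % k + i.val) % k, Nat.mod_lt _ hk⟩ :=
          hx.2.2 _ _ rfl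
        have h00 : x ⟨0, hk⟩ = x' ⟨0, hk⟩ :=
          le_antisymm (hle2.trans (le_of_eq e2)) (hle1.trans (le_of_eq e1.symm))
        have hm1 : ((k - i.val) % k + i'.val) % k = 0 := by
          have := hx'.1 (e1.symm.trans h00)
          exact congrArg Fin.val this
        have hii : i = i' := by
          apply Fin.ext
          have hA := mod0_cases hk (by
            have := Nat.mod_lt (k - i.val) hk
            have := i.isLt
            omega : (k - i.val) % k + i.val < 2 * k) (cancel_mod i.isLt)
          have hB := mod0_cases hk (by
            have := Nat.mod_lt (k - i.val) hk
            have := i'.isLt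
            omega : (k - i.val) % k + i'.val < 2 * k) hm1
          have hi1 := i.isLt
          have hi2 := i'.isLt
          omega
        subst hii
        subst hα
        have hxx : x = x' := by
          funext m
          have e3 := hev ((m.val + (k - i.val)) % k) (Nat.mod_lt _ hk)
          have hm : ((m.val + (k - i.val)) % k + i.val) % k = m.val := by
            rw [Nat.mod_add_mod]
            have h5 : m.val + (k - i.val) + i.val = m.val + k := by
              have := i.isLt; omega
            rw [h5, Nat.add_mod_right, Nat.mod_eq_of_lt m.isLt]
          simp only [hm, Fin.eta] at e3
          exact e3
        subst hxx
        rfl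
      · rintro ⟨⟨α, y⟩, hyinj, hycyc⟩
        obtain ⟨i₀, -, hmin⟩ := Finset.exists_min_image (Finset.univ : Finset (Fin k)) y
          ⟨⟨0, hk⟩, Finset.mem_univ _⟩
        have hxinj := rot_inj hk hyinj i₀
        have hxcyc := rot_cyc hk hycyc i₀
        have hxmin : ∀ a b : Fin k, (a : ℕ) = 0 → rot hk y i₀ a ≤ rot hk y i₀ b := by
          intro a b ha
          have hx0 : rot hk y i₀ a = y i₀ := by
            show y _ = y i₀
            congr 1
            apply Fin.ext
            show ((a : ℕ) + (i₀ : ℕ)) % k = (i₀ : ℕ)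
            rw [ha, Nat.zero_add, Nat.mod_eq_of_lt i₀.isLt]
          rw [hx0]
          exact hmin _ (Finset.mem_univ _)
        refine ⟨⟨⟨(α, rot hk y i₀), ⟨hxinj, hxcyc, hxmin⟩⟩,
          ⟨(k - i₀.val) % k, Nat.mod_lt _ hk⟩⟩, ?_⟩
        apply Subtype.ext
        show (α, rot hk (rot hk y i₀) _) = (α, y)
        have hy : rot hk (rot hk y i₀) ⟨(k - i₀.val) % k, Nat.mod_lt _ hk⟩ = y := by
          funext j
          show y ⟨(((j : ℕ) + (k - i₀.val) % k) % k + (i₀ : ℕ)) % k, _⟩ = y j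
          congr 1
          apply Fin.ext
          show (((j : ℕ) + (k - i₀.val) % k) % k + (i₀ : ℕ)) % k = (j : ℕ)
          rw [Nat.mod_add_mod]
          have hmeq : ((j : ℕ) + (k - i₀.val) % k + i₀.val) % k
              = ((j : ℕ) + (k - i₀.val) + i₀.val) % k :=
            ((Nat.mod_modEq (k - i₀.val) k).add_left (j : ℕ)).add_right i₀.val
          rw [hmeq]
          have h6 : (j : ℕ) + (k - i₀.val) + i₀.val = (j : ℕ) + k := by
            have := i₀.isLt; omega
          rw [h6, Nat.add_mod_right, Nat.mod_eq_of_lt j.isLt]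
        rw [hy]
    rw [← Nat.card_congr (Equiv.ofBijective φ hbij), Nat.card_prod,
      Nat.card_eq_fintype_card (α := Fin k), Fintype.card_fin]
  have hcoe : Set.ncard {p : PInj n × (Fin k → Fin n) | IsCycleOf n k p.1 p.2}
      = Nat.card R := by
    rw [← Nat.card_coe_set_eq]
    rfl
  rw [hcoe, Nat.mul_comm, ← key2, key1]
end

section
/- For every n ≥ 1: sum over k from 0 to n-1 of (n-k)*binom(n,k)^2*k! equals sum over k from 1 to n of [n]_k * |IS_{n-k}|, where [n]_k is the falling factorial and |IS_m| = sum_j binom(m,j)^2 * j!. -/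
open Finset

lemma descFactorial_add' (m k : ℕ) : ∀ j, m.descFactorial (k + j)
    = m.descFactorial k * (m - k).descFactorial j
  | 0 => by simp
  | j + 1 => by
    rw [← Nat.add_assoc, Nat.descFactorial_succ, descFactorial_add' m k j,
      Nat.descFactorial_succ, Nat.sub_sub]
    ring

lemma tri_swap (m : ℕ) (f : ℕ → ℕ → ℕ) :
    ∑ k ∈ range (m + 1), ∑ j ∈ range (m + 1 - k), f k j
      = ∑ t ∈ range (m + 1), ∑ k ∈ range (t + 1), f k (t - k) := by
  rw [Finset.sum_sigma', Finset.sum_sigma']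
  apply Finset.sum_nbij' (i := fun x => ⟨x.1 + x.2, x.1⟩) (j := fun x => ⟨x.2, x.1 - x.2⟩)
  · rintro ⟨k, j⟩ hm
    simp only [mem_sigma, mem_range] at *
    omega
  · rintro ⟨t, k⟩ hm
    simp only [mem_sigma, mem_range] at *
    omega
  · rintro ⟨k, j⟩ hm; simp
  · rintro ⟨t, k⟩ hm
    simp only [mem_sigma, mem_range] at hm
    simp only [Sigma.mk.inj_iff, heq_eq_eq]
    refine ⟨?_, by simp⟩
    omega
  · rintro ⟨k, j⟩ hm; simp

lemma inner_choose (m t : ℕ) (ht : t ≤ m) :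
    ∑ k ∈ range (t + 1), (m - k).choose (t - k) = (m + 1).choose t := by
  have h1 : ∑ k ∈ range (t + 1), (m - k).choose (t - k)
      = ∑ k ∈ range (t + 1), (m - k).choose (m - t) := by
    apply Finset.sum_congr rfl
    intro k hk
    simp only [mem_range] at hk
    rw [← Nat.choose_symm (by omega)]
    congr 1
    omega
  rw [h1]
  have h2 : ∑ k ∈ range (t + 1), (m - k).choose (m - t)
      = ∑ i ∈ Icc (m - t) m, i.choose (m - t) := by
    apply Finset.sum_nbij' (i := fun k => m - k) (j := fun i => m - i)
    · intro k hk; simp only [mem_range, mem_Icc] at *; omega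
    · intro i hi; simp only [mem_range, mem_Icc] at *; omega
    · intro k hk; simp only [mem_range] at hk; omega
    · intro i hi; simp only [mem_Icc] at hi; omega
    · intro k hk; rfl
  rw [h2, Nat.sum_Icc_choose, ← Nat.choose_symm (by omega)]
  congr 1
  omega

theorem stmt6 (n : ℕ) (h : 1 ≤ n) :
    ∑ k ∈ Finset.range n, (n - k) * ((n.choose k) ^ 2 * k.factorial)
      = ∑ k ∈ Finset.Icc 1 n, n.descFactorial k * cardIS (n - k) := by
  obtain ⟨m, rfl⟩ : ∃ m, n = m + 1 := ⟨n - 1, by omega⟩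
  clear h
  -- LHS: pull out factor (m+1)
  have lhs_eq : ∑ k ∈ range (m + 1), (m + 1 - k) * ((m + 1).choose k ^ 2 * k.factorial)
      = (m + 1) * ∑ k ∈ range (m + 1), m.choose k * ((m + 1).choose k * k.factorial) := by
    rw [Finset.mul_sum]
    apply Finset.sum_congr rfl
    intro k hk
    have key : (m + 1 - k) * (m + 1).choose k = (m + 1) * m.choose k := by
      have h1 := Nat.add_one_mul_choose_eq m k
      rw [mul_comm, ← Nat.choose_succ_right_eq, ← h1]
    calc (m + 1 - k) * ((m + 1).choose k ^ 2 * k.factorial)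
        = ((m + 1 - k) * (m + 1).choose k) * ((m + 1).choose k * k.factorial) := by ring
      _ = ((m + 1) * m.choose k) * ((m + 1).choose k * k.factorial) := by rw [key]
      _ = (m + 1) * (m.choose k * ((m + 1).choose k * k.factorial)) := by ring
  -- RHS: reindex and pull out factor (m+1)
  have rhs_eq : ∑ k ∈ Finset.Icc 1 (m + 1), (m + 1).descFactorial k * cardIS (m + 1 - k)
      = (m + 1) * ∑ k ∈ range (m + 1), m.descFactorial k * cardIS (m - k) := by
    rw [← Finset.Ico_add_one_right_eq_Icc, Finset.sum_Ico_eq_sum_range, Finset.mul_sum]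
    apply Finset.sum_congr (by norm_num)
    intro k hk
    rw [show 1 + k = k + 1 from by omega, Nat.succ_descFactorial_succ,
      show m + 1 - (k + 1) = m - k from by omega]
    ring
  rw [lhs_eq, rhs_eq]
  congr 1
  -- core identity
  unfold cardIS
  have expand : ∑ k ∈ range (m + 1), m.descFactorial k *
        ∑ j ∈ range (m - k + 1), (m - k).choose j ^ 2 * j.factorial
      = ∑ k ∈ range (m + 1), ∑ j ∈ range (m + 1 - k),
          (m - k).choose j * m.descFactorial (k + j) := by
    apply Finset.sum_congr rfl
    intro k hk
    simp only [mem_range] at hk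
    rw [Finset.mul_sum, show m - k + 1 = m + 1 - k from by omega]
    apply Finset.sum_congr rfl
    intro j hj
    rw [descFactorial_add' m k j, Nat.descFactorial_eq_factorial_mul_choose (m - k) j]
    ring
  rw [expand, tri_swap]
  apply Finset.sum_congr rfl
  intro t ht
  simp only [mem_range] at ht
  have step : ∑ k ∈ range (t + 1), (m - k).choose (t - k) * m.descFactorial (k + (t - k))
      = ∑ k ∈ range (t + 1), (m - k).choose (t - k) * m.descFactorial t := by
    apply Finset.sum_congr rfl
    intro k hk
    simp only [mem_range] at hk
    congr 2
    omega
  rw [step, ← Finset.sum_mul, inner_choose m t (by omega),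
    Nat.descFactorial_eq_factorial_mul_choose]
  ring
end

section
/- For every n ≥ 1: (1/n) * sum over k from 1 to n of (k * binom(n,k)^2 * k! + [n]_k * |IS_{n-k}|) = |IS_n|, where |IS_m| = sum_j binom(m,j)^2 * j! and [n]_k is the falling factorial. -/
open Finset in

def Dsum (m : ℕ) : ℕ := ∑ k ∈ Finset.range (m + 1), (m - k) * ((m.choose k) ^ 2 * k.factorial)

def Csum (m : ℕ) : ℕ := ∑ k ∈ Finset.Icc 1 m, m.descFactorial k * cardIS (m - k)

lemma icc_sum (m : ℕ) (f : ℕ → ℕ) :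
    ∑ k ∈ Finset.Icc 1 m, f k = ∑ j ∈ Finset.range m, f (j + 1) := by
  rw [← Finset.Ico_add_one_right_eq_Icc, Finset.sum_Ico_eq_sum_range]
  simp [Nat.add_comm]

lemma Csum_succ (m : ℕ) : Csum (m + 1) = (m + 1) * (cardIS m + Csum m) := by
  unfold Csum
  rw [icc_sum, icc_sum]
  have : ∀ j, (m + 1).descFactorial (j + 1) * cardIS (m + 1 - (j + 1))
      = (m + 1) * (m.descFactorial j * cardIS (m - j)) := by
    intro j
    rw [Nat.succ_descFactorial_succ]
    have : m + 1 - (j + 1) = m - j := by omega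
    rw [this, Nat.mul_assoc]
  simp_rw [this, ← Finset.mul_sum]
  congr 1
  rw [Finset.sum_range_succ' (fun j => m.descFactorial j * cardIS (m - j)) m]
  simp [Nat.add_comm]

lemma Dsum_succ (m : ℕ) : Dsum (m + 1) = (m + 1) * (cardIS m + Dsum m) := by
  have hIS : cardIS m = 1 + ∑ j ∈ Finset.range m, m.choose (j + 1) ^ 2 * (j + 1).factorial := by
    unfold cardIS
    rw [Finset.sum_range_succ']
    simp [Nat.add_comm]
  have hD : Dsum m = ∑ j ∈ Finset.range m, (m - j) * (m.choose j ^ 2 * j.factorial) := by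
    unfold Dsum
    rw [Finset.sum_range_succ]
    simp
  rw [hIS, hD]
  unfold Dsum
  rw [Finset.sum_range_succ]
  simp only [Nat.sub_self, Nat.zero_mul, Nat.add_zero]
  rw [Finset.sum_range_succ']
  have h0 : (m + 1 - 0) * ((m + 1).choose 0 ^ 2 * Nat.factorial 0) = m + 1 := by simp
  rw [h0]
  have hterm : ∀ j, (m + 1 - (j + 1)) * ((m + 1).choose (j + 1) ^ 2 * (j + 1).factorial)
      = (m + 1) * (m.choose (j + 1) ^ 2 * (j + 1).factorial)
        + (m + 1) * ((m - j) * (m.choose j ^ 2 * j.factorial)) := by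
    intro j
    have h1 : (m + 1 - (j + 1)) * (m + 1).choose (j + 1) = (m + 1) * m.choose (j + 1) := by
      rw [Nat.mul_comm, Nat.mul_comm (m + 1)]
      exact (Nat.choose_mul_succ_eq m (j + 1)).symm
    have h2 : m.choose (j + 1) * (j + 1).factorial
        = (m - j) * (m.choose j * j.factorial) := by
      rw [Nat.factorial_succ, ← Nat.mul_assoc, Nat.choose_succ_right_eq]
      ring
    have h3 : (m + 1).choose (j + 1) = m.choose j + m.choose (j + 1) :=
      Nat.choose_succ_succ m j
    calc (m + 1 - (j + 1)) * ((m + 1).choose (j + 1) ^ 2 * (j + 1).factorial)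
        = ((m + 1 - (j + 1)) * (m + 1).choose (j + 1)) * ((m + 1).choose (j + 1) * (j + 1).factorial) := by ring
      _ = ((m + 1) * m.choose (j + 1)) * ((m.choose j + m.choose (j + 1)) * (j + 1).factorial) := by rw [h1, ← h3]
      _ = (m + 1) * (m.choose (j + 1) ^ 2 * (j + 1).factorial)
          + (m + 1) * (m.choose j * (m.choose (j + 1) * (j + 1).factorial)) := by ring
      _ = _ := by rw [h2]; ring
  simp_rw [hterm]
  rw [Finset.sum_add_distrib, ← Finset.mul_sum, ← Finset.mul_sum]
  ring

lemma DC (m : ℕ) : Dsum m = Csum m := by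
  induction m with
  | zero => simp [Dsum, Csum]
  | succ m ih => rw [Dsum_succ, Csum_succ, ih]

lemma key (n : ℕ) :
    ∑ k ∈ Finset.Icc 1 n,
      (k * (n.choose k ^ 2 * k.factorial) + n.descFactorial k * cardIS (n - k))
      = n * cardIS n := by
  rw [Finset.sum_add_distrib]
  have h1 : ∑ k ∈ Finset.Icc 1 n, k * (n.choose k ^ 2 * k.factorial)
      = ∑ k ∈ Finset.range (n + 1), k * (n.choose k ^ 2 * k.factorial) := by
    rw [icc_sum, Finset.sum_range_succ']
    simp
  rw [h1]
  have h2 : (∑ k ∈ Finset.Icc 1 n, n.descFactorial k * cardIS (n - k)) = Dsum n :=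
    (DC n).symm
  rw [h2]
  unfold Dsum cardIS
  rw [← Finset.sum_add_distrib, Finset.mul_sum]
  apply Finset.sum_congr rfl
  intro k hk
  have hkn : k ≤ n := Nat.lt_succ_iff.mp (Finset.mem_range.mp hk)
  have hkn' : k + (n - k) = n := by omega
  calc k * (n.choose k ^ 2 * k.factorial) + (n - k) * (n.choose k ^ 2 * k.factorial)
      = (k + (n - k)) * (n.choose k ^ 2 * k.factorial) := by ring
    _ = n * (n.choose k ^ 2 * k.factorial) := by rw [hkn']

theorem stmt7 (n : ℕ) (h : 1 ≤ n) :
    (1 / (n : ℚ)) * ∑ k ∈ Finset.Icc 1 n,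
        ((k * ((n.choose k) ^ 2 * k.factorial) + n.descFactorial k * cardIS (n - k) : ℕ) : ℚ)
      = (cardIS n : ℚ) := by
  rw [← Nat.cast_sum, key n]
  have hn : (n : ℚ) ≠ 0 := by positivity
  push_cast
  field_simp
end

section
/- The total number of chains in the chain decompositions of all elements of IS_n equals the sum over all α in IS_n of the stable rank of α (the number of points lying in cycles of α). -/
/-- The stable rank of `α`: the number of points lying in cycles of `α`,
i.e. the points on which all powers of `α` are defined. -/
def stableRank (n : ℕ) (α : PInj n) : ℕ :=
  (Finset.univ.filter (fun x => iterMap n α.val n x ≠ none)).card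

namespace Stmt8Aux

open Classical in
/-- partial inverse -/
noncomputable def pinv (n : ℕ) (f : Fin n → Option (Fin n)) (y : Fin n) : Option (Fin n) :=
  if h : ∃ a, f a = some y then some (Classical.choose h) else none

theorem pinv_some {n : ℕ} {f : Fin n → Option (Fin n)} {y a : Fin n}
    (h : pinv n f y = some a) : f a = some y := by
  unfold pinv at h
  split at h
  · next hex => cases h; exact Classical.choose_spec hex
  · simp at h

theorem pinv_eq_some {n : ℕ} {f : Fin n → Option (Fin n)} (hf : IsPInj n f) {y a : Fin n}
    (h : f a = some y) : pinv n f y = some a := by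
  unfold pinv
  split
  · next hex => exact congrArg some (hf _ _ _ (Classical.choose_spec hex) h)
  · next hex => exact absurd ⟨a, h⟩ hex

theorem pinv_none {n : ℕ} {f : Fin n → Option (Fin n)} {y : Fin n}
    (h : ∀ a, f a ≠ some y) : pinv n f y = none := by
  unfold pinv
  split
  · next hex => exact absurd (Classical.choose_spec hex) (h _)
  · rfl

theorem pinv_isPInj (n : ℕ) (f : Fin n → Option (Fin n)) : IsPInj n (pinv n f) := by
  intro a b c h1 h2
  have := (pinv_some h1).symm.trans (pinv_some h2)
  exact Option.some_injective _ this

theorem iter_succ (n : ℕ) (f : Fin n → Option (Fin n)) (k : ℕ) (x : Fin n) :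
    iterMap n f (k + 1) x = (f x).bind (iterMap n f k) := rfl

theorem iter_add (n : ℕ) (f : Fin n → Option (Fin n)) (a b : ℕ) (x : Fin n) :
    iterMap n f (a + b) x = (iterMap n f a x).bind (iterMap n f b) := by
  induction a generalizing x with
  | zero => simp [iterMap]
  | succ a ih =>
    have h1 : a + 1 + b = (a + b) + 1 := by omega
    rw [h1, iter_succ, iter_succ]
    cases f x with
    | none => rfl
    | some y => simpa using ih y

theorem iter_one (n : ℕ) (f : Fin n → Option (Fin n)) (x : Fin n) :
    iterMap n f 1 x = f x := by
  rw [iter_succ]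
  cases f x <;> rfl

theorem iter_succ' (n : ℕ) (f : Fin n → Option (Fin n)) (k : ℕ) (x : Fin n) :
    iterMap n f (k + 1) x = (iterMap n f k x).bind f := by
  rw [iter_add]
  cases iterMap n f k x with
  | none => rfl
  | some y => simpa using iter_one n f y

theorem iter_none_mono {n : ℕ} {f : Fin n → Option (Fin n)} {a b : ℕ} (hab : a ≤ b)
    {x : Fin n} (h : iterMap n f a x = none) : iterMap n f b x = none := by
  rw [show b = a + (b - a) by omega, iter_add, h]
  rfl

theorem iter_some_mono {n : ℕ} {f : Fin n → Option (Fin n)} {a b : ℕ} (hab : a ≤ b)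
    {x : Fin n} (h : iterMap n f b x ≠ none) : iterMap n f a x ≠ none :=
  fun hn => h (iter_none_mono hab hn)

theorem forward {n : ℕ} {f : Fin n → Option (Fin n)} :
    ∀ (j : ℕ) (x a : Fin n), iterMap n (pinv n f) j x = some a → iterMap n f j a = some x := by
  intro j
  induction j with
  | zero => intro x a h; cases h; rfl
  | succ j ih =>
    intro x a h
    rw [iter_succ] at h
    cases hy : pinv n f x with
    | none => rw [hy] at h; exact absurd h (by simp)
    | some y =>
      rw [hy] at h
      have h' : iterMap n (pinv n f) j y = some a := h
      rw [iter_succ', ih y a h']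
      simpa using pinv_some hy

theorem backward {n : ℕ} {f : Fin n → Option (Fin n)} (hf : IsPInj n f) :
    ∀ (j : ℕ) (a x : Fin n), iterMap n f j a = some x → iterMap n (pinv n f) j x = some a := by
  intro j
  induction j with
  | zero => intro a x h; cases h; rfl
  | succ j ih =>
    intro a x h
    rw [iter_succ] at h
    cases hb : f a with
    | none => rw [hb] at h; exact absurd h (by simp)
    | some b =>
      rw [hb] at h
      have h' : iterMap n f j b = some x := h
      rw [iter_succ', ih b x h']
      simpa using pinv_eq_some hf hb

theorem cancel {n : ℕ} {f : Fin n → Option (Fin n)} (hf : IsPInj n f) :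
    ∀ (i k : ℕ) (x a : Fin n), iterMap n f i x = some a → iterMap n f (i + k) x = some a →
      iterMap n f k x = some x := by
  intro i
  induction i with
  | zero =>
    intro k x a h1 h2
    cases h1
    simpa using h2
  | succ i ih =>
    intro k x a h1 h2
    rw [iter_succ'] at h1
    rw [show i + 1 + k = (i + k) + 1 by omega, iter_succ'] at h2
    cases hb : iterMap n f i x with
    | none => rw [hb] at h1; exact absurd h1 (by simp)
    | some b =>
      rw [hb] at h1
      cases hb' : iterMap n f (i + k) x with
      | none => rw [hb'] at h2; exact absurd h2 (by simp)
      | some b' =>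
        rw [hb'] at h2
        have h1' : f b = some a := h1
        have h2' : f b' = some a := h2
        have : b = b' := hf _ _ _ h1' h2'
        subst this
        exact ih k x b hb hb'

theorem exists_cycle {n : ℕ} {f : Fin n → Option (Fin n)} (hf : IsPInj n f) {x : Fin n}
    (h : iterMap n f n x ≠ none) : ∃ L, 0 < L ∧ iterMap n f L x = some x := by
  have hsome : ∀ j : Fin (n + 1), ∃ a, iterMap n f j.1 x = some a := by
    intro j
    have := iter_some_mono (by omega : j.1 ≤ n) h
    exact Option.ne_none_iff_exists'.mp this
  set g : Fin (n + 1) → Fin n := fun j => (hsome j).choose with hg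
  have hcard : Fintype.card (Fin n) < Fintype.card (Fin (n + 1)) := by simp
  obtain ⟨j, k, hjk, heq⟩ := Fintype.exists_ne_map_eq_of_card_lt g hcard
  have main : ∀ j k : Fin (n + 1), j.1 < k.1 → g j = g k → ∃ L, 0 < L ∧ iterMap n f L x = some x := by
    intro j k hlt heq
    have hj : iterMap n f (↑j) x = some (g j) := (hsome j).choose_spec
    have hk : iterMap n f (↑k) x = some (g k) := (hsome k).choose_spec
    rw [← heq] at hk
    refine ⟨k.1 - j.1, by omega, ?_⟩
    exact cancel hf j.1 (k.1 - j.1) x (g j) hj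
      (by rw [show j.1 + (k.1 - j.1) = k.1 by omega]; exact hk)
  have hne : j.1 ≠ k.1 := fun hh => hjk (Fin.ext hh)
  rcases Nat.lt_or_ge j.1 k.1 with hlt | hge
  · exact main j k hlt heq
  · exact main k j (by omega) heq.symm

theorem no_return {n : ℕ} {f : Fin n → Option (Fin n)} {x : Fin n} (hx : f x = none)
    {k : ℕ} (hk : 0 < k) : iterMap n f k x = none := by
  obtain ⟨k', rfl⟩ : ∃ k', k = k' + 1 := ⟨k - 1, by omega⟩
  rw [iter_succ, hx]
  rfl

theorem backward_none {n : ℕ} {f : Fin n → Option (Fin n)} (hf : IsPInj n f) {x : Fin n}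
    (hx : f x = none) : iterMap n (pinv n f) n x = none := by
  by_contra h
  obtain ⟨L, hL, hLx⟩ := exists_cycle (pinv_isPInj n f) h
  have := forward L x x hLx
  rw [no_return hx hL] at this
  exact nomatch this

theorem exists_start {n : ℕ} {f : Fin n → Option (Fin n)} (hf : IsPInj n f) {x : Fin n}
    (hx : f x = none) :
    ∃ s j, iterMap n (pinv n f) j x = some s ∧ pinv n f s = none := by
  have hex : ∃ m, iterMap n (pinv n f) m x = none := ⟨n, backward_none hf hx⟩
  set m := Nat.find hex with hm
  have hm0 : 0 < m := by
    rcases Nat.eq_zero_or_pos m with h0 | h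
    · have := Nat.find_spec hex
      rw [← hm, h0] at this
      exact absurd this (by simp [iterMap])
    · exact h
  have hlt : m - 1 < m := by omega
  have hsome : iterMap n (pinv n f) (m - 1) x ≠ none := Nat.find_min hex hlt
  obtain ⟨s, hs⟩ := Option.ne_none_iff_exists'.mp hsome
  refine ⟨s, m - 1, hs, ?_⟩
  have hmnone : iterMap n (pinv n f) m x = none := Nat.find_spec hex
  rw [show m = (m - 1) + 1 by omega, iter_succ', hs] at hmnone
  exact hmnone

theorem start_unique {n : ℕ} {f : Fin n → Option (Fin n)}
    {x s s' : Fin n} {j j' : ℕ}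
    (h1 : iterMap n (pinv n f) j x = some s) (h2 : pinv n f s = none)
    (h1' : iterMap n (pinv n f) j' x = some s') (h2' : pinv n f s' = none) : s = s' := by
  have key : ∀ {a b : ℕ} {u v : Fin n}, a ≤ b →
      iterMap n (pinv n f) a x = some u → pinv n f u = none →
      iterMap n (pinv n f) b x = some v → a = b := by
    intro a b u v hab hu hnu hv
    by_contra hne
    have : iterMap n (pinv n f) (a + 1) x = none := by
      rw [iter_succ', hu]; exact hnu
    have := iter_none_mono (by omega : a + 1 ≤ b) this
    rw [hv] at this
    exact nomatch this
  rcases Nat.le_total j j' with hle | hle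
  · have := key hle h1 h2 h1'
    subst this
    exact Option.some_injective _ (h1.symm.trans h1')
  · have := key hle h1' h2' h1
    subst this
    exact Option.some_injective _ (h1.symm.trans h1')

/-- Iterating an updated map agrees with the original as long as the path avoids `x`. -/
theorem iter_update {n : ℕ} (f : Fin n → Option (Fin n)) (x : Fin n) (v : Option (Fin n)) :
    ∀ (j : ℕ) (a : Fin n), (∀ i c, i < j → iterMap n f i a = some c → c ≠ x) →
      iterMap n (Function.update f x v) j a = iterMap n f j a := by
  intro j
  induction j with
  | zero => intro a _; rfl
  | succ j ih =>
    intro a h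
    have hax : a ≠ x := h 0 a (by omega) rfl
    rw [iter_succ, iter_succ, Function.update_of_ne hax]
    cases hb : f a with
    | none => rfl
    | some b =>
      have h' : iterMap n (Function.update f x v) j b = iterMap n f j b := by
        apply ih
        intro i c hij hic
        exact h (i + 1) c (by omega) (by rw [iter_succ, hb]; exact hic)
      simpa using h'

noncomputable def chainStart {n : ℕ} {f : Fin n → Option (Fin n)} (hf : IsPInj n f)
    {x : Fin n} (hx : f x = none) : Fin n :=
  (exists_start hf hx).choose

theorem chainStart_spec {n : ℕ} {f : Fin n → Option (Fin n)} (hf : IsPInj n f)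
    {x : Fin n} (hx : f x = none) :
    ∃ j, iterMap n (pinv n f) j x = some (chainStart hf hx) ∧ pinv n f (chainStart hf hx) = none := by
  obtain ⟨j, h1, h2⟩ := (exists_start hf hx).choose_spec
  exact ⟨j, h1, h2⟩

theorem chainStart_eq {n : ℕ} {f : Fin n → Option (Fin n)} (hf : IsPInj n f)
    {x : Fin n} (hx : f x = none) {c : Fin n} {j : ℕ}
    (h1 : iterMap n (pinv n f) j x = some c) (h2 : pinv n f c = none) :
    chainStart hf hx = c := by
  obtain ⟨j', h1', h2'⟩ := chainStart_spec hf hx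
  exact start_unique h1' h2' h1 h2

/-- Close the chain through `x` into a cycle. -/
noncomputable def closeAt (n : ℕ) (x : Fin n) (α : PInj n) (hx : α.val x = none) : PInj n :=
  ⟨Function.update α.val x (some (chainStart α.2 hx)), by
    intro a b c h1 h2
    obtain ⟨j, hj, hnone⟩ := chainStart_spec α.2 hx
    have hnopre : ∀ a, α.val a ≠ some (chainStart α.2 hx) := by
      intro a ha
      rw [pinv_eq_some α.2 ha] at hnone
      exact nomatch hnone
    by_cases hax : a = x <;> by_cases hbx : b = x
    · rw [hax, hbx]
    · rw [hax, Function.update_self] at h1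
      rw [Function.update_of_ne hbx] at h2
      rw [← Option.some_injective _ h1] at h2
      exact absurd h2 (hnopre b)
    · rw [hbx, Function.update_self] at h2
      rw [Function.update_of_ne hax] at h1
      rw [← Option.some_injective _ h2] at h1
      exact absurd h1 (hnopre a)
    · rw [Function.update_of_ne hax] at h1
      rw [Function.update_of_ne hbx] at h2
      exact α.2 a b c h1 h2⟩

theorem closeAt_val (n : ℕ) (x : Fin n) (α : PInj n) (hx : α.val x = none) :
    (closeAt n x α hx).val = Function.update α.val x (some (chainStart α.2 hx)) := rfl

theorem closeAt_cycle (n : ℕ) (x : Fin n) (α : PInj n) (hx : α.val x = none) :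
    iterMap n (closeAt n x α hx).val n x ≠ none := by
  obtain ⟨j, hj, hnone⟩ := chainStart_spec α.2 hx
  rw [closeAt_val]
  -- forward path in α from s to x
  have hfwd : iterMap n α.val j (chainStart α.2 hx) = some x := forward j x _ hj
  -- intermediates avoid x
  have hmid : ∀ i c, i < j → iterMap n α.val i (chainStart α.2 hx) = some c → c ≠ x := by
    intro i c hij hic hcx
    rw [hcx] at hic
    have hdec : iterMap n (pinv n α.val) ((j - i) + i) x = some (chainStart α.2 hx) := by
      rw [show j - i + i = j by omega]; exact hj
    rw [iter_add] at hdec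
    cases hmidv : iterMap n (pinv n α.val) (j - i) x with
    | none => rw [hmidv] at hdec; exact absurd hdec (by simp)
    | some c' =>
      rw [hmidv] at hdec
      have hdec' : iterMap n (pinv n α.val) i c' = some (chainStart α.2 hx) := hdec
      have hfwd' : iterMap n α.val i (chainStart α.2 hx) = some c' := forward i c' _ hdec'
      have hcc : c' = x := Option.some_injective _ (hfwd'.symm.trans hic)
      rw [hcc] at hmidv
      have hfx : iterMap n α.val (j - i) x = some x := forward (j - i) x x hmidv
      rw [no_return hx (by omega : 0 < j - i)] at hfx
      exact nomatch hfx
  -- the updated map agrees with α on the path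
  have hβpath : iterMap n (Function.update α.val x (some (chainStart α.2 hx))) j
      (chainStart α.2 hx) = some x := by
    rw [iter_update α.val x _ j _ hmid]
    exact hfwd
  have hstep : iterMap n (Function.update α.val x (some (chainStart α.2 hx))) (j + 1) x
      = some x := by
    rw [iter_succ, Function.update_self]
    exact hβpath
  have hmul : ∀ t, iterMap n (Function.update α.val x (some (chainStart α.2 hx)))
      (t * (j + 1)) x = some x := by
    intro t
    induction t with
    | zero => rw [Nat.zero_mul]; rfl
    | succ t ih =>
      rw [show (t + 1) * (j + 1) = t * (j + 1) + (j + 1) by ring, iter_add, ih]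
      exact hstep
  have hle : n ≤ n * (j + 1) := Nat.le_mul_of_pos_right n (by omega)
  apply iter_some_mono hle
  rw [hmul n]
  simp

/-- Delete the edge at `x`. -/
def openAt (n : ℕ) (x : Fin n) (β : PInj n) : PInj n :=
  ⟨Function.update β.val x none, by
    intro a b c h1 h2
    have hax : a ≠ x := by
      intro h; rw [h, Function.update_self] at h1; exact nomatch h1
    have hbx : b ≠ x := by
      intro h; rw [h, Function.update_self] at h2; exact nomatch h2
    rw [Function.update_of_ne hax] at h1
    rw [Function.update_of_ne hbx] at h2
    exact β.2 a b c h1 h2⟩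

theorem openAt_val (n : ℕ) (x : Fin n) (β : PInj n) :
    (openAt n x β).val = Function.update β.val x none := rfl

theorem openAt_none (n : ℕ) (x : Fin n) (β : PInj n) : (openAt n x β).val x = none := by
  rw [openAt_val, Function.update_self]

theorem openAt_closeAt (n : ℕ) (x : Fin n) (α : PInj n) (hx : α.val x = none) :
    openAt n x (closeAt n x α hx) = α := by
  apply Subtype.ext
  rw [openAt_val, closeAt_val, Function.update_idem]
  funext y
  by_cases hy : y = x
  · rw [hy, Function.update_self, hx]
  · rw [Function.update_of_ne hy]

theorem closeAt_openAt (n : ℕ) (x : Fin n) (β : PInj n)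
    (hβ : iterMap n β.val n x ≠ none) (hx : (openAt n x β).val x = none) :
    closeAt n x (openAt n x β) hx = β := by
  have hn : 0 < n := x.pos
  -- β x is some c
  obtain ⟨c, hc⟩ : ∃ c, β.val x = some c := by
    have h1 : iterMap n β.val ((n - 1) + 1) x ≠ none := by
      rw [show (n - 1) + 1 = n by omega]; exact hβ
    rw [iter_succ] at h1
    cases hcx : β.val x with
    | none => rw [hcx] at h1; exact absurd rfl h1
    | some c => exact ⟨c, rfl⟩
  -- minimal cycle length
  have hexL : ∃ L, 0 < L ∧ iterMap n β.val L x = some x := exists_cycle β.2 hβ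
  obtain ⟨L, hL0, hLx, hmin⟩ :
      ∃ L, 0 < L ∧ iterMap n β.val L x = some x ∧
        ∀ i, i < L → ¬(0 < i ∧ iterMap n β.val i x = some x) :=
    ⟨Nat.find hexL, (Nat.find_spec hexL).1, (Nat.find_spec hexL).2,
      fun i hi => Nat.find_min hexL hi⟩
  -- path from c to x of length L - 1 in β
  have hpath : iterMap n β.val (L - 1) c = some x := by
    have h2 : iterMap n β.val ((L - 1) + 1) x = some x := by
      rw [show (L - 1) + 1 = L by omega]; exact hLx
    rw [iter_succ, hc] at h2
    exact h2
  -- intermediates avoid x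
  have hmid : ∀ i d, i < L - 1 → iterMap n β.val i c = some d → d ≠ x := by
    intro i d hiL hid hdx
    rw [hdx] at hid
    have hstep : iterMap n β.val (i + 1) x = some x := by
      rw [iter_succ, hc]
      exact hid
    exact hmin (i + 1) (by omega) ⟨by omega, hstep⟩
  -- path survives after deleting the edge at x
  have hαpath : iterMap n (openAt n x β).val (L - 1) c = some x := by
    rw [openAt_val, iter_update β.val x none (L - 1) c hmid]
    exact hpath
  -- backward orbit of x reaches c
  have hback : iterMap n (pinv n (openAt n x β).val) (L - 1) x = some c :=
    backward (openAt n x β).2 (L - 1) c x hαpath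
  -- c has no preimage after deletion
  have hnopre : pinv n (openAt n x β).val c = none := by
    apply pinv_none
    intro a ha
    have hax : a ≠ x := by
      intro h; rw [h, hx] at ha; exact nomatch ha
    rw [openAt_val, Function.update_of_ne hax] at ha
    exact hax (β.2 a x c ha hc)
  have hcs : chainStart (openAt n x β).2 hx = c := chainStart_eq _ hx hback hnopre
  apply Subtype.ext
  rw [closeAt_val, hcs, openAt_val, Function.update_idem]
  funext y
  by_cases hy : y = x
  · rw [hy, Function.update_self, hc]
  · rw [Function.update_of_ne hy]

theorem key_count (n : ℕ) (x : Fin n) :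
    (Finset.univ.filter fun α : PInj n => α.val x = none).card
      = (Finset.univ.filter fun α : PInj n => iterMap n α.val n x ≠ none).card := by
  classical
  refine Finset.card_bij'
    (fun α hα => closeAt n x α (by simpa using (Finset.mem_filter.mp hα).2))
    (fun β hβ => openAt n x β) ?_ ?_ ?_ ?_
  · intro α hα
    simp only [Finset.mem_filter, Finset.mem_univ, true_and]
    exact closeAt_cycle n x α _
  · intro β hβ
    simp only [Finset.mem_filter, Finset.mem_univ, true_and]
    exact openAt_none n x β
  · intro α hα
    exact openAt_closeAt n x α _
  · intro β hβ
    exact closeAt_openAt n x β (by simpa using (Finset.mem_filter.mp hβ).2) (openAt_none n x β)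

end Stmt8Aux

open Stmt8Aux in
theorem stmt8 (n : ℕ) :
    ∑ α : PInj n, (n - domCard n α) = ∑ α : PInj n, stableRank n α := by
  classical
  have hdom : ∀ α : PInj n, n - domCard n α
      = (Finset.univ.filter fun x : Fin n => α.val x = none).card := by
    intro α
    have h := Finset.card_filter_add_card_filter_not
      (s := (Finset.univ : Finset (Fin n))) (p := fun x : Fin n => α.val x = none)
    have hB : (Finset.univ.filter fun x : Fin n => ¬ α.val x = none)
        = (Finset.univ.filter fun x : Fin n => α.val x ≠ none) := by
      ext y; simp [Ne]
    rw [hB, Finset.card_univ, Fintype.card_fin] at h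
    unfold domCard
    omega
  calc ∑ α : PInj n, (n - domCard n α)
      = ∑ α : PInj n, (Finset.univ.filter fun x : Fin n => α.val x = none).card :=
        Finset.sum_congr rfl fun α _ => hdom α
    _ = ∑ α : PInj n, ∑ x : Fin n, (if α.val x = none then 1 else 0) :=
        Finset.sum_congr rfl fun α _ => Finset.card_filter _ _
    _ = ∑ x : Fin n, ∑ α : PInj n, (if α.val x = none then 1 else 0) := Finset.sum_comm
    _ = ∑ x : Fin n, (Finset.univ.filter fun α : PInj n => α.val x = none).card :=
        Finset.sum_congr rfl fun x _ => (Finset.card_filter _ _).symm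
    _ = ∑ x : Fin n, (Finset.univ.filter fun α : PInj n => iterMap n α.val n x ≠ none).card :=
        Finset.sum_congr rfl fun x _ => key_count n x
    _ = ∑ x : Fin n, ∑ α : PInj n, (if iterMap n α.val n x ≠ none then 1 else 0) :=
        Finset.sum_congr rfl fun x _ => Finset.card_filter _ _
    _ = ∑ α : PInj n, ∑ x : Fin n, (if iterMap n α.val n x ≠ none then 1 else 0) :=
        Finset.sum_comm
    _ = ∑ α : PInj n, stableRank n α :=
        Finset.sum_congr rfl fun α _ => (Finset.card_filter _ _).symm
end

section
/- Let P_n be the total number of fixed points over all elements of IS_n, and L_n the total number of chains over all elements of IS_n. Then P_n + L_n/n = |IS_n|. -/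
/-- Number of fixed points of `α`. -/
def fixCard (n : ℕ) (α : PInj n) : ℕ :=
  (Finset.univ.filter (fun x => α.val x = some x)).card

/-- Conjugate a partial injection by the transposition swapping `x` and `y` on values. -/
def twist (n : ℕ) (x y : Fin n) (α : PInj n) : PInj n :=
  ⟨fun z => (α.val z).map (Equiv.swap x y), by
    intro a b c ha hb
    rw [Option.map_eq_some_iff] at ha hb
    obtain ⟨a', ha', ha''⟩ := ha
    obtain ⟨b', hb', hb''⟩ := hb
    have : a' = b' := (Equiv.swap x y).injective (ha''.trans hb''.symm)
    exact α.prop a b a' ha' (this ▸ hb')⟩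

lemma twist_twist (n : ℕ) (x y : Fin n) (α : PInj n) :
    twist n x y (twist n x y α) = α := by
  apply Subtype.ext
  funext z
  cases hz : α.val z <;> simp [twist, hz, Equiv.swap_apply_self]

lemma key_s9 (n : ℕ) : ∑ α : PInj n, domCard n α = (∑ α : PInj n, fixCard n α) * n := by
  classical
  set S1 : Finset (PInj n × Fin n) :=
      Finset.univ.filter (fun p => p.1.val p.2 ≠ none) with hS1
  set T : Finset (PInj n × Fin n) :=
      Finset.univ.filter (fun p => p.1.val p.2 = some p.2) with hT
  have hD : ∑ α : PInj n, domCard n α = S1.card := by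
    rw [hS1, Finset.card_filter, ← Finset.univ_product_univ, Finset.sum_product]
    simp [domCard, Finset.card_filter]
  have hA : ∑ α : PInj n, fixCard n α = T.card := by
    rw [hT, Finset.card_filter, ← Finset.univ_product_univ, Finset.sum_product]
    refine Finset.sum_congr rfl fun α _ => ?_
    rw [fixCard, Finset.card_filter]
  have hbij : S1.card = (T ×ˢ (Finset.univ : Finset (Fin n))).card := by
    apply Finset.card_bij'
      (i := fun p _ => ((twist n p.2 ((p.1.val p.2).getD p.2) p.1, p.2),
        (p.1.val p.2).getD p.2))
      (j := fun q _ => (twist n q.1.2 q.2 q.1.1, q.1.2))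
    · intro p hp
      simp only [hS1, Finset.mem_filter, Finset.mem_univ, true_and] at hp
      obtain ⟨y, hy⟩ := Option.ne_none_iff_exists'.mp hp
      simp only [Finset.mem_product, Finset.mem_univ, and_true, hT,
        Finset.mem_filter, true_and]
      simp only [twist, hy, Option.getD_some, Option.map_some, Equiv.swap_apply_right]
    · intro q hq
      simp only [Finset.mem_product, hT, Finset.mem_filter, Finset.mem_univ,
        true_and, and_true] at hq
      simp only [hS1, Finset.mem_filter, Finset.mem_univ, true_and]
      simp only [twist, hq, Option.map_some]
      exact Option.some_ne_none _
    · intro p hp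
      simp only [hS1, Finset.mem_filter, Finset.mem_univ, true_and] at hp
      obtain ⟨y, hy⟩ := Option.ne_none_iff_exists'.mp hp
      simp only [hy, Option.getD_some]
      rw [twist_twist]
    · intro q hq
      simp only [Finset.mem_product, hT, Finset.mem_filter, Finset.mem_univ,
        true_and, and_true] at hq
      have h1 : (twist n q.1.2 q.2 q.1.1).val q.1.2 = some q.2 := by
        simp only [twist, hq, Option.map_some, Equiv.swap_apply_left]
      simp only [h1, Option.getD_some]
      rw [twist_twist]
  rw [hD, hA, hbij, Finset.card_product, Finset.card_univ, Fintype.card_fin]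

theorem stmt9 (n : ℕ) (h : 0 < n) :
    ((∑ α : PInj n, fixCard n α : ℕ) : ℚ)
        + ((∑ α : PInj n, (n - domCard n α) : ℕ) : ℚ) / (n : ℚ)
      = (Nat.card (PInj n) : ℚ) := by
  classical
  have hle : ∀ α : PInj n, domCard n α ≤ n := fun α =>
    (Finset.card_filter_le Finset.univ _).trans (by simp)
  have hcast : ((∑ α : PInj n, (n - domCard n α) : ℕ) : ℚ)
      = (n : ℚ) * (Nat.card (PInj n) : ℚ) - ∑ α : PInj n, (domCard n α : ℚ) := by
    rw [Nat.cast_sum]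
    rw [Finset.sum_congr rfl fun α _ => Nat.cast_sub (hle α)]
    rw [Finset.sum_sub_distrib, Finset.sum_const, Finset.card_univ,
      Nat.card_eq_fintype_card]
    ring
  have hkey : (∑ α : PInj n, (domCard n α : ℚ))
      = (∑ α : PInj n, (fixCard n α : ℚ)) * n := by
    have := key_s9 n
    have h2 : ((∑ α : PInj n, domCard n α : ℕ) : ℚ)
        = ((( ∑ α : PInj n, fixCard n α) * n : ℕ) : ℚ) :=
      congrArg (fun m : ℕ => (m : ℚ)) this
    push_cast at h2
    exact h2
  rw [Nat.cast_sum, hcast, hkey]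
  have hn : (n : ℚ) ≠ 0 := Nat.cast_ne_zero.mpr h.ne'
  field_simp
  ring
end

section
/- The number of elements α in IS_n with 1 not in dom(α) equals the number of nilpotent elements of IS_n. -/
set_option linter.unusedSectionVars false
set_option linter.unusedVariables false
namespace Aux


variable {n : ℕ}

lemma iter_zero (f) (x : Fin n) : iterMap n f 0 x = some x := rfl

lemma iter_succ (f) (k : ℕ) (x : Fin n) :
    iterMap n f (k+1) x = (f x).bind (iterMap n f k) := rfl

lemma iter_add (f) (j k : ℕ) (x : Fin n) :
    iterMap n f (j + k) x = (iterMap n f j x).bind (iterMap n f k) := by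
  induction j generalizing x with
  | zero => simp [iter_zero]
  | succ j ih =>
      have e : j + 1 + k = (j + k) + 1 := by omega
      rw [e, iter_succ, iter_succ]
      cases f x <;> simp [ih]

lemma iter_succ_r (f) (k : ℕ) (x : Fin n) :
    iterMap n f (k+1) x = (iterMap n f k x).bind f := by
  rw [show k + 1 = k + 1 from rfl, iter_add f k 1]
  cases iterMap n f k x with
  | none => rfl
  | some y => show iterMap n f 1 y = f y; rw [iter_succ]; cases f y <;> rfl

/-- cyclic point -/
def cyc (f : Fin n → Option (Fin n)) (x : Fin n) : Prop :=
  ∃ k, 0 < k ∧ iterMap n f k x = some x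

lemma iter_some_of_le (f) {x : Fin n} {i j : ℕ} (hij : i ≤ j) {w}
    (hj : iterMap n f j x = some w) : ∃ v, iterMap n f i x = some v := by
  rcases Nat.exists_eq_add_of_le hij with ⟨l, rfl⟩
  rw [iter_add] at hj
  cases hi : iterMap n f i x with
  | none => rw [hi] at hj; simp at hj
  | some v => exact ⟨v, rfl⟩

lemma cyc_some (f) {x : Fin n} (hx : cyc f x) (k : ℕ) :
    ∃ v, iterMap n f k x = some v := by
  obtain ⟨d, hd, hit⟩ := hx
  have hmult : ∀ q, iterMap n f (q * d) x = some x := by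
    intro q
    induction q with
    | zero => simp [iter_zero]
    | succ q ih => rw [Nat.succ_mul, iter_add, ih]; simpa using hit
  have hk : k ≤ k * d := Nat.le_mul_of_pos_right k hd
  exact iter_some_of_le f hk (hmult k)

lemma not_cyc_of_none (f) {x : Fin n} {k : ℕ} (hk : iterMap n f k x = none) :
    ¬ cyc f x := by
  intro hc
  obtain ⟨v, hv⟩ := cyc_some f hc k
  rw [hk] at hv; exact absurd hv (by simp)

lemma cyc_next (f) {x y : Fin n} (hxy : f x = some y) (hx : cyc f x) : cyc f y := by
  obtain ⟨k, hk, hit⟩ := hx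
  refine ⟨k, hk, ?_⟩
  have h1 : iterMap n f (k+1) x = iterMap n f k y := by
    rw [iter_succ, hxy]; rfl
  have h2 : iterMap n f (k+1) x = some y := by
    rw [iter_succ_r, hit]; simpa using hxy
  rw [h1] at h2
  -- iter k y = some y
  exact h2

lemma cyc_iter (f) {x w : Fin n} {k : ℕ} (hx : cyc f x)
    (hw : iterMap n f k x = some w) : cyc f w := by
  induction k generalizing x with
  | zero => rw [iter_zero] at hw; cases hw; exact hx
  | succ k ih =>
      rw [iter_succ] at hw
      cases hy : f x with
      | none => rw [hy] at hw; simp at hw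
      | some y =>
          rw [hy] at hw
          exact ih (cyc_next f hy hx) hw

lemma cyc_prev (f) (hf : IsPInj n f) {x y : Fin n} (hxy : f x = some y)
    (hy : cyc f y) : cyc f x := by
  obtain ⟨k, hk, hit⟩ := hy
  obtain ⟨p, hp⟩ := iter_some_of_le f (Nat.sub_le k 1) hit
  have hstep : iterMap n f k y = (iterMap n f (k-1) y).bind f := by
    conv_lhs => rw [show k = (k-1) + 1 by omega]
    exact iter_succ_r f (k-1) y
  rw [hit, hp] at hstep
  have hpy : f p = some y := hstep.symm
  have hpx : p = x := hf p x y hpy hxy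
  refine ⟨k, hk, ?_⟩
  rw [show k = 1 + (k-1) by omega, iter_add, iter_succ, hxy]
  show iterMap n f (k-1) y = some x
  rw [hp, hpx]

/-- if orbit of x0 reaches w and also eventually dies, w is not cyclic -/
lemma not_cyc_of_reach (f) {x0 w : Fin n} {i j : ℕ}
    (hi : iterMap n f i x0 = some w) (hj : iterMap n f j x0 = none) :
    ¬ cyc f w := by
  intro hc
  rcases le_or_gt j i with hji | hij
  · obtain ⟨v, hv⟩ := iter_some_of_le f hji hi
    rw [hj] at hv; exact absurd hv (by simp)
  · obtain ⟨v, hv⟩ := cyc_some f hc (j - i)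
    have : iterMap n f j x0 = some v := by
      rw [show j = i + (j - i) by omega, iter_add, hi]; simpa using hv
    rw [hj] at this; exact absurd this (by simp)

lemma cyc_of_iter_eq (f) {x w : Fin n} {i j : ℕ} (hij : i < j)
    (hi : iterMap n f i x = some w) (hj : iterMap n f j x = some w) :
    cyc f w := by
  refine ⟨j - i, by omega, ?_⟩
  have : iterMap n f j x = (iterMap n f i x).bind (iterMap n f (j-i)) := by
    rw [← iter_add]; congr 1; omega
  rw [hj, hi] at this
  exact this.symm ▸ rfl


lemma iter_one (f) (x : Fin n) : iterMap n f 1 x = f x := by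
  rw [iter_succ]; cases f x <;> rfl

lemma cyc_fsome (f) {x : Fin n} (hx : cyc f x) : (f x).isSome := by
  obtain ⟨v, hv⟩ := cyc_some f hx 1
  rw [iter_one] at hv; rw [hv]; rfl

lemma iter_mult (g) {x : Fin n} {p : ℕ} (hit : iterMap n g p x = some x) :
    ∀ q, iterMap n g (q * p) x = some x := by
  intro q
  induction q with
  | zero => simp [iter_zero]
  | succ q ih => rw [Nat.succ_mul, iter_add, ih]; simpa using hit

/-- transport of iterates along agreeing maps -/
lemma iter_congr (f g : Fin n → Option (Fin n)) (x : Fin n) (K : ℕ)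
    (H : ∀ i, i < K → ∀ w, iterMap n f i x = some w → g w = f w) :
    ∀ i, i ≤ K → iterMap n g i x = iterMap n f i x := by
  intro i hi
  induction i with
  | zero => rfl
  | succ i ih =>
      rw [iter_succ_r, iter_succ_r, ih (by omega)]
      cases hw : iterMap n f i x with
      | none => rfl
      | some w => simp [H i (by omega) w hw]

noncomputable def cycF {n : ℕ} (f : Fin n → Option (Fin n)) : Finset (Fin n) :=
  @Finset.filter _ (cyc f) (Classical.decPred _) Finset.univ

lemma mem_cycF {n : ℕ} (f) (x : Fin n) : x ∈ cycF f ↔ cyc f x := by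
  simp [cycF]

section Z
variable {n : ℕ} [NeZero n]

noncomputable def pl (f : Fin n → Option (Fin n)) : ℕ :=
  sInf {k | iterMap n f k 0 = none}

variable {f : Fin n → Option (Fin n)}


lemma pl_none (hex : ∃ k, iterMap n f k 0 = none) :
    iterMap n f (pl f) 0 = none := by
  exact Nat.sInf_mem (s := {k | iterMap n f k 0 = none}) hex

lemma pl_some (hex : ∃ k, iterMap n f k 0 = none) {i : ℕ} (hi : i < pl f) :
    ∃ v, iterMap n f i 0 = some v := by
  have := Nat.notMem_of_lt_sInf (s := {k | iterMap n f k 0 = none}) hi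
  cases h : iterMap n f i 0 with
  | none => exact absurd h this
  | some v => exact ⟨v, rfl⟩

lemma pl_pos (hex : ∃ k, iterMap n f k 0 = none) : 0 < pl f := by
  rcases Nat.eq_zero_or_pos (pl f) with h | h
  · have := pl_none hex; rw [h] at this; exact absurd this (by simp [iter_zero])
  · exact h

lemma pl_eq (K : ℕ) (hK : iterMap n f K 0 = none)
    (hlt : ∀ i, i < K → (iterMap n f i 0).isSome) : pl f = K := by
  have hex : ∃ k, iterMap n f k 0 = none := ⟨K, hK⟩
  refine le_antisymm (Nat.sInf_le hK) ?_
  by_contra hlt'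
  push_neg at hlt'
  have h1 := pl_none hex
  have h2 := hlt _ hlt'
  rw [h1] at h2; simp at h2


noncomputable def Tl (f : Fin n → Option (Fin n)) : ℕ := pl f - 1

noncomputable def ep (f : Fin n → Option (Fin n)) : Fin n :=
  (iterMap n f (Tl f) 0).getD 0

lemma ep_spec (hex : ∃ k, iterMap n f k 0 = none) :
    iterMap n f (Tl f) 0 = some (ep f) := by
  obtain ⟨v, hv⟩ := pl_some hex (i := Tl f) (by have := pl_pos hex; unfold Tl; omega)
  rw [ep, hv]; rfl

lemma Tl_succ (hex : ∃ k, iterMap n f k 0 = none) : Tl f + 1 = pl f := by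
  have := pl_pos hex; unfold Tl; omega

lemma f_ep (hex : ∃ k, iterMap n f k 0 = none) : f (ep f) = none := by
  have h1 : iterMap n f (Tl f + 1) 0 = none := by rw [Tl_succ hex]; exact pl_none hex
  rw [iter_succ_r, ep_spec hex] at h1
  exact h1

lemma path_not_cyc (hex : ∃ k, iterMap n f k 0 = none) {i : ℕ} {w : Fin n}
    (hw : iterMap n f i 0 = some w) : ¬ cyc f w :=
  not_cyc_of_reach f hw (pl_none hex)

lemma path_inj (hex : ∃ k, iterMap n f k 0 = none) {i j : ℕ} {w : Fin n}
    (hij : i < j) (hi : iterMap n f i 0 = some w) (hj : iterMap n f j 0 = some w) :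
    False :=
  path_not_cyc hex hi (cyc_of_iter_eq f hij hi hj)

omit [NeZero n] in
lemma path_lt_n (x : Fin n) (K : ℕ)
    (hs : ∀ i, i ≤ K → ∃ v, iterMap n f i x = some v)
    (hnc : ∀ i, i ≤ K → ∀ w, iterMap n f i x = some w → ¬ cyc f w) :
    K < n := by
  have hinj : Function.Injective
      (fun i : Fin (K+1) => (iterMap n f i x).getD x) := by
    rintro ⟨a, ha⟩ ⟨b, hb⟩ hab
    obtain ⟨va, hva⟩ := hs a (by omega)
    obtain ⟨vb, hvb⟩ := hs b (by omega)
    simp only [hva, hvb, Option.getD_some] at hab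
    subst hab
    rcases Nat.lt_trichotomy a b with h | h | h
    · exact absurd (cyc_of_iter_eq f h hva hvb) (hnc a (by omega) va hva)
    · exact Fin.ext h
    · exact absurd (cyc_of_iter_eq f h hvb hva) (hnc b (by omega) va hvb)
  have := Fintype.card_le_of_injective _ hinj
  simpa using this

lemma pl_le_n (hex : ∃ k, iterMap n f k 0 = none) : pl f ≤ n := by
  have hTn : Tl f < n := by
    apply path_lt_n (f := f) 0 (Tl f)
    · intro i hi
      exact pl_some hex (by have := Tl_succ hex; omega)
    · intro i hi w hw
      exact path_not_cyc hex hw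
  have := Tl_succ hex; omega

noncomputable def mx (f : Fin n → Option (Fin n)) : Fin n :=
  if hC : (cycF f).Nonempty then (cycF f).max' hC else 0

lemma mx_cyc (hC : (cycF f).Nonempty) : cyc f (mx f) := by
  rw [mx, dif_pos hC]
  exact (mem_cycF f _).mp ((cycF f).max'_mem hC)

lemma mx_max (hC : (cycF f).Nonempty) {x : Fin n} (hx : cyc f x) : x ≤ mx f := by
  rw [mx, dif_pos hC]
  exact (cycF f).le_max' x ((mem_cycF f x).mpr hx)

def Good (f : Fin n → Option (Fin n)) : Prop :=
  (∃ k, iterMap n f k 0 = none) ∧ ((f 0).isSome → ∀ x, cyc f x → x < ep f)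

/-- forward surgery: cut max cycle, attach at path end -/
noncomputable def step (f : Fin n → Option (Fin n)) : Fin n → Option (Fin n) :=
  if (cycF f).Nonempty then
    fun x => if x = ep f then f (mx f) else if x = mx f then none else f x
  else f

/-- index of last path point exceeding the endpoint -/
noncomputable def i0 (f : Fin n → Option (Fin n)) : ℕ :=
  Nat.findGreatest
    (fun i => i < Tl f ∧ ∃ u, iterMap n f i 0 = some u ∧ ep f < u) (Tl f)

noncomputable def e' (f : Fin n → Option (Fin n)) : Fin n :=
  (iterMap n f (i0 f) 0).getD 0

/-- backward surgery: cut path after `e'`, close final segment into a cycle -/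
noncomputable def rstep (f : Fin n → Option (Fin n)) : Fin n → Option (Fin n) :=
  if (f 0).isSome then
    fun x => if x = e' f then none else if x = ep f then f (e' f) else f x
  else f

section Per
omit [NeZero n]
variable {x : Fin n}

noncomputable def per (f : Fin n → Option (Fin n)) (x : Fin n) : ℕ :=
  sInf {k | 0 < k ∧ iterMap n f k x = some x}

lemma per_mem (hx : cyc f x) : 0 < per f x ∧ iterMap n f (per f x) x = some x :=
  Nat.sInf_mem (s := {k | 0 < k ∧ iterMap n f k x = some x}) hx

lemma per_min (hx : cyc f x) {i : ℕ} (h0 : 0 < i) (hi : i < per f x) :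
    iterMap n f i x ≠ some x := by
  have := Nat.notMem_of_lt_sInf (s := {k | 0 < k ∧ iterMap n f k x = some x}) hi
  intro hc; exact this ⟨h0, hc⟩

end Per

lemma rstep_eq {f : Fin n → Option (Fin n)} (hd : (f 0).isSome) : rstep f =
    fun x => if x = e' f then none else if x = ep f then f (e' f) else f x :=
  if_pos hd

lemma fg_pos_spec {P : ℕ → Prop} [DecidablePred P] {b : ℕ}
    (h : 0 < Nat.findGreatest P b) : P (Nat.findGreatest P b) := by
  by_contra hP
  by_cases hex : ∃ k, 0 < k ∧ k ≤ b ∧ P k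
  · obtain ⟨k, hk1, hk2, hk3⟩ := hex
    exact hP (Nat.findGreatest_spec hk2 hk3)
  · push_neg at hex
    have hz : Nat.findGreatest P b = 0 := by
      rw [Nat.findGreatest_eq_zero_iff]
      intro k hk1 hk2 hPk
      exact absurd hPk (by simpa using hex k hk1 hk2)
    omega

lemma Tl_pos_of_dom {f : Fin n → Option (Fin n)}
    (hex : ∃ k, iterMap n f k 0 = none) (hd : (f 0).isSome) : 0 < Tl f := by
  rcases Nat.eq_zero_or_pos (Tl f) with h0 | h0
  · have h1 : pl f = 1 := by have := pl_pos hex; unfold Tl at h0; omega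
    have h2 := pl_none hex
    rw [h1, iter_one] at h2
    rw [h2] at hd; simp at hd
  · exact h0


end Z


section StepA
variable {n : ℕ} [NeZero n] {f : Fin n → Option (Fin n)}
variable (hf : IsPInj n f) (hG : Good f) (hC : (cycF f).Nonempty)

lemma hexG (hG : Good f) : ∃ k, iterMap n f k 0 = none := hG.1

include hf hG hC

lemma ep_ne_mx : ep f ≠ mx f := by
  intro h
  exact path_not_cyc (hexG hG) (ep_spec (hexG hG)) (h ▸ mx_cyc hC)

lemma step_eq : step f =
    fun x => if x = ep f then f (mx f) else if x = mx f then none else f x :=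
  if_pos hC

lemma step_agree {w : Fin n} (hw1 : w ≠ ep f) (hw2 : w ≠ mx f) :
    step f w = f w := by
  rw [step_eq hf hG hC]; simp [hw1, hw2]

lemma step_ep : step f (ep f) = f (mx f) := by rw [step_eq hf hG hC]; simp

lemma step_mx : step f (mx f) = none := by
  rw [step_eq hf hG hC]
  have h2 : mx f ≠ ep f := Ne.symm (ep_ne_mx hf hG hC)
  simp [h2]

lemma step_pinj : IsPInj n (step f) := by
  intro a b c ha hb
  have key : ∀ u, step f u = some c →
      (u = ep f ∧ f (mx f) = some c) ∨ (u ≠ ep f ∧ u ≠ mx f ∧ f u = some c) := by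
    intro u hu
    by_cases h1 : u = ep f
    · left
      refine ⟨h1, ?_⟩
      rw [h1, step_ep hf hG hC] at hu
      exact hu
    · by_cases h2 : u = mx f
      · rw [h2, step_mx hf hG hC] at hu
        exact absurd hu (by simp)
      · right
        refine ⟨h1, h2, ?_⟩
        rw [step_agree hf hG hC h1 h2] at hu
        exact hu
  rcases key a ha with ⟨h1, h2⟩ | ⟨h1, h2, h3⟩ <;>
    rcases key b hb with ⟨g1, g2⟩ | ⟨g1, g2, g3⟩
  · rw [h1, g1]
  · exact absurd (hf b (mx f) c g3 h2) g2
  · exact absurd (hf a (mx f) c h3 g2) h2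
  · exact hf a b c h3 g3

lemma iter_step_path {i : ℕ} (hi : i ≤ Tl f) :
    iterMap n (step f) i 0 = iterMap n f i 0 := by
  refine iter_congr f (step f) 0 (Tl f) ?_ i hi
  intro j hj w hw
  have hw1 : w ≠ ep f := by
    intro h
    exact path_inj (hexG hG) hj hw (h ▸ ep_spec (hexG hG))
  have hw2 : w ≠ mx f := by
    intro h
    exact path_not_cyc (hexG hG) hw (h ▸ mx_cyc hC)
  exact step_agree hf hG hC hw1 hw2

lemma iter_step_seg {j : ℕ} (hj : j + 1 ≤ per f (mx f)) :
    iterMap n (step f) (Tl f + 1 + j) 0 = iterMap n f (j+1) (mx f) := by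
  induction j with
  | zero =>
      simp only [Nat.add_zero]
      rw [iter_succ_r (step f) (Tl f) 0, iter_step_path hf hG hC (le_refl _),
        ep_spec (hexG hG), iter_one]
      show step f (ep f) = f (mx f)
      exact step_ep hf hG hC
  | succ j ih =>
      have hd := (per_mem (mx_cyc hC (f := f))).1
      have h1 : Tl f + 1 + (j+1) = (Tl f + 1 + j) + 1 := by omega
      rw [h1, iter_succ_r (step f) (Tl f + 1 + j) 0, ih (by omega)]
      obtain ⟨w, hw⟩ := cyc_some f (mx_cyc hC) (j+1)
      have hwc : cyc f w := cyc_iter f (mx_cyc hC) hw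
      have hw2 : w ≠ mx f := by
        intro h
        exact per_min (mx_cyc hC) (by omega) (by omega) (h ▸ hw)
      have hw1 : w ≠ ep f := by
        intro h
        exact path_not_cyc (hexG hG) (ep_spec (hexG hG)) (h ▸ hwc)
      rw [hw]
      conv_rhs => rw [show j+1+1 = (j+1)+1 from rfl, iter_succ_r f (j+1) (mx f), hw]
      show step f w = f w
      exact step_agree hf hG hC hw1 hw2

lemma iter_step_mx :
    iterMap n (step f) (Tl f + per f (mx f)) 0 = some (mx f) := by
  have hd := (per_mem (mx_cyc hC (f := f))).1
  have h := iter_step_seg hf hG hC (j := per f (mx f) - 1) (by omega)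
  rw [show Tl f + 1 + (per f (mx f) - 1) = Tl f + per f (mx f) by omega] at h
  rw [h, show per f (mx f) - 1 + 1 = per f (mx f) by omega]
  exact (per_mem (mx_cyc hC (f := f))).2

lemma iter_step_none :
    iterMap n (step f) (Tl f + per f (mx f) + 1) 0 = none := by
  rw [iter_succ_r (step f) _ 0, iter_step_mx hf hG hC]
  show step f (mx f) = none
  exact step_mx hf hG hC

lemma hex_step : ∃ k, iterMap n (step f) k 0 = none :=
  ⟨_, iter_step_none hf hG hC⟩

lemma pl_step : pl (step f) = Tl f + per f (mx f) + 1 := by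
  have hd := (per_mem (mx_cyc hC (f := f))).1
  apply pl_eq _ (iter_step_none hf hG hC)
  intro i hi
  rcases le_or_gt i (Tl f) with h | h
  · rw [iter_step_path hf hG hC h]
    obtain ⟨v, hv⟩ := pl_some (hexG hG) (i := i) (by have := Tl_succ (hexG hG); omega)
    rw [hv]; rfl
  · have h2 : i = Tl f + 1 + (i - Tl f - 1) := by omega
    rw [h2, iter_step_seg hf hG hC (by omega)]
    obtain ⟨v, hv⟩ := cyc_some f (mx_cyc hC) (i - Tl f - 1 + 1)
    rw [hv]; rfl

lemma Tl_step : Tl (step f) = Tl f + per f (mx f) := by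
  rw [Tl, pl_step hf hG hC]; omega

lemma ep_step : ep (step f) = mx f := by
  rw [ep, Tl_step hf hG hC, iter_step_mx hf hG hC]; rfl

lemma dom_step : (step f 0).isSome := by
  rcases Nat.eq_zero_or_pos (Tl f) with hT | hT
  · have he : ep f = 0 := by
      have h := ep_spec (hexG hG); rw [hT, iter_zero] at h
      exact (Option.some.inj h).symm
    rw [← he, step_ep hf hG hC]
    exact cyc_fsome f (mx_cyc hC)
  · have h0 : iterMap n f 0 0 = some 0 := rfl
    have h1 : (0 : Fin n) ≠ ep f := by
      intro h
      exact path_inj (hexG hG) hT h0 (h ▸ ep_spec (hexG hG)) |>.elim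
    have h2 : (0 : Fin n) ≠ mx f := by
      intro h
      exact path_not_cyc (hexG hG) h0 (h ▸ mx_cyc hC)
    rw [step_agree hf hG hC h1 h2]
    obtain ⟨v, hv⟩ := pl_some (hexG hG) (i := 1) (by have := Tl_succ (hexG hG); omega)
    rw [iter_one] at hv; rw [hv]; rfl

lemma not_cyc_step_ep : ¬ cyc (step f) (ep f) := by
  have h1 : iterMap n (step f) (Tl f) 0 = some (ep f) := by
    rw [iter_step_path hf hG hC (le_refl _)]; exact ep_spec (hexG hG)
  exact not_cyc_of_reach (step f) h1 (iter_step_none hf hG hC)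

lemma not_cyc_step_mx : ¬ cyc (step f) (mx f) :=
  not_cyc_of_reach (step f) (iter_step_mx hf hG hC) (iter_step_none hf hG hC)

lemma cyc_step_imp {x : Fin n} (hx : cyc (step f) x) :
    cyc f x ∧ x < mx f := by
  have key : ∀ i w, iterMap n (step f) i x = some w → f w = step f w := by
    intro i w hw
    have hwc : cyc (step f) w := cyc_iter (step f) hx hw
    have hw1 : w ≠ ep f := fun h => not_cyc_step_ep hf hG hC (h ▸ hwc)
    have hw2 : w ≠ mx f := fun h => not_cyc_step_mx hf hG hC (h ▸ hwc)
    exact (step_agree hf hG hC hw1 hw2).symm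
  obtain ⟨k, hk, hit⟩ := hx
  have heq : iterMap n f k x = iterMap n (step f) k x :=
    iter_congr (step f) f x k (fun i hi w hw => key i w hw) k (le_refl _)
  have hcf : cyc f x := ⟨k, hk, heq.trans hit⟩
  refine ⟨hcf, ?_⟩
  have h1 : x ≤ mx f := mx_max hC hcf
  have h2 : x ≠ mx f := fun h => not_cyc_step_mx hf hG hC (h ▸ ⟨k, hk, hit⟩)
  exact lt_of_le_of_ne h1 h2

lemma good_step : Good (step f) := by
  refine ⟨hex_step hf hG hC, ?_⟩
  intro _ x hx
  rw [ep_step hf hG hC]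
  exact (cyc_step_imp hf hG hC hx).2

lemma cycF_step_lt : (cycF (step f)).card < (cycF f).card := by
  apply Finset.card_lt_card
  constructor
  · intro x hx
    rw [mem_cycF] at hx ⊢
    exact (cyc_step_imp hf hG hC hx).1
  · intro hsub
    have h := hsub ((mem_cycF f _).mpr (mx_cyc hC))
    rw [mem_cycF] at h
    exact not_cyc_step_mx hf hG hC h


lemma i0_step : i0 (step f) = Tl f := by
  have hd := (per_mem (mx_cyc hC (f := f))).1
  have hT' : Tl (step f) = Tl f + per f (mx f) := Tl_step hf hG hC
  have notP : ∀ i, Tl f < i →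
      ¬ (i < Tl (step f) ∧ ∃ u, iterMap n (step f) i 0 = some u ∧ ep (step f) < u) := by
    rintro i hi ⟨hiT, u, hu, hlt⟩
    rw [hT'] at hiT
    have h2 : i = Tl f + 1 + (i - Tl f - 1) := by omega
    rw [h2, iter_step_seg hf hG hC (by omega)] at hu
    have hcu : cyc f u := cyc_iter f (mx_cyc hC) hu
    have := mx_max hC hcu
    rw [ep_step hf hG hC] at hlt
    exact absurd hlt (not_lt.mpr this)
  unfold i0
  by_cases hdom : (f 0).isSome
  · have hT1 : 0 < Tl f := Tl_pos_of_dom (hexG hG) hdom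
    have hPT : Tl f < Tl (step f) ∧
        ∃ u, iterMap n (step f) (Tl f) 0 = some u ∧ ep (step f) < u := by
      refine ⟨by omega, ep f, ?_, ?_⟩
      · rw [iter_step_path hf hG hC (le_refl _)]; exact ep_spec (hexG hG)
      · rw [ep_step hf hG hC]; exact hG.2 hdom (mx f) (mx_cyc hC)
    refine le_antisymm ?_ (Nat.le_findGreatest (by omega) hPT)
    by_contra hlt
    push_neg at hlt
    have hfg := Nat.findGreatest_spec
      (P := fun i => i < Tl (step f) ∧ ∃ u, iterMap n (step f) i 0 = some u ∧ ep (step f) < u)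
      (by omega : Tl f ≤ Tl (step f)) hPT
    exact notP _ hlt hfg
  · have hf0 : f 0 = none := by
      cases h : f 0 with
      | none => rfl
      | some v => rw [h] at hdom; simp at hdom
    have hT0 : Tl f = 0 := by
      have h1 : pl f = 1 := by
        apply pl_eq 1
        · rw [iter_one]; exact hf0
        · intro i hi
          interval_cases i
          rfl
      unfold Tl; omega
    rw [hT0]
    rw [Nat.findGreatest_eq_zero_iff]
    intro k hk1 hk2 hPk
    exact notP k (by omega) hPk

lemma e'_step : e' (step f) = ep f := by
  rw [e', i0_step hf hG hC, iter_step_path hf hG hC (le_refl _), ep_spec (hexG hG)]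
  rfl

lemma ep_ne_e' : ep f ≠ e' (step f) → False := by
  intro h; exact h (e'_step hf hG hC).symm

lemma rstep_step : rstep (step f) = f := by
  rw [rstep_eq (dom_step hf hG hC), e'_step hf hG hC, ep_step hf hG hC]
  funext x
  by_cases h1 : x = ep f
  · rw [if_pos h1, h1, f_ep (hexG hG)]
  · rw [if_neg h1]
    by_cases h2 : x = mx f
    · rw [if_pos h2, h2, step_ep hf hG hC]
    · rw [if_neg h2, step_agree hf hG hC h1 h2]

end StepA

section RStepA
variable {n : ℕ} [NeZero n] {f : Fin n → Option (Fin n)}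

/-- start of the final segment -/
noncomputable def sN (f : Fin n → Option (Fin n)) : Fin n :=
  (iterMap n f (i0 f + 1) 0).getD 0

variable (hf : IsPInj n f) (hG : Good f) (hd : (f 0).isSome)

include hf hG hd

lemma i0_le : i0 f ≤ Tl f := by unfold i0; exact Nat.findGreatest_le _

lemma i0_spec_pos (hp : 0 < i0 f) :
    i0 f < Tl f ∧ ∃ u, iterMap n f (i0 f) 0 = some u ∧ ep f < u := by
  unfold i0 at hp ⊢; exact fg_pos_spec hp

lemma i0_gt {i : ℕ} (h1 : i0 f < i) (h2 : i ≤ Tl f) :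
    ¬ (i < Tl f ∧ ∃ u, iterMap n f i 0 = some u ∧ ep f < u) := by
  unfold i0 at h1; exact Nat.findGreatest_is_greatest h1 h2

lemma i0_lt : i0 f < Tl f := by
  have hT := Tl_pos_of_dom (hexG hG) hd
  rcases Nat.eq_zero_or_pos (i0 f) with h0 | h0
  · omega
  · exact (i0_spec_pos hf hG hd h0).1

lemma e'_spec : iterMap n f (i0 f) 0 = some (e' f) := by
  obtain ⟨v, hv⟩ := pl_some (hexG hG) (i := i0 f)
    (by have h1 := i0_lt hf hG hd; have := Tl_succ (hexG hG); omega)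
  rw [e', hv]; rfl

lemma seg_le {j : ℕ} {u : Fin n} (h1 : i0 f < j) (h2 : j < Tl f)
    (hu : iterMap n f j 0 = some u) : u ≤ ep f := by
  have := i0_gt hf hG hd h1 (le_of_lt h2)
  by_contra hlt
  exact this ⟨h2, u, hu, not_le.mp hlt⟩

lemma ep_lt_e' (hp : 0 < i0 f) : ep f < e' f := by
  obtain ⟨-, u, hu, hlt⟩ := i0_spec_pos hf hG hd hp
  rw [e'_spec hf hG hd] at hu
  exact (Option.some.inj hu) ▸ hlt

lemma sN_spec : iterMap n f (i0 f + 1) 0 = some (sN f) := by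
  obtain ⟨v, hv⟩ := pl_some (hexG hG) (i := i0 f + 1)
    (by have h1 := i0_lt hf hG hd; have := Tl_succ (hexG hG); omega)
  rw [sN, hv]; rfl

lemma f_e' : f (e' f) = some (sN f) := by
  have h := sN_spec hf hG hd
  rw [iter_succ_r, e'_spec hf hG hd] at h
  exact h

lemma e'_ne_ep : e' f ≠ ep f := by
  intro h
  exact path_inj (hexG hG) (i0_lt hf hG hd) (e'_spec hf hG hd)
    (h ▸ ep_spec (hexG hG))

lemma rstep_agree {x : Fin n} (h1 : x ≠ e' f) (h2 : x ≠ ep f) :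
    rstep f x = f x := by
  rw [rstep_eq hd]; simp [h1, h2]

lemma rstep_e' : rstep f (e' f) = none := by rw [rstep_eq hd]; simp

lemma rstep_ep : rstep f (ep f) = f (e' f) := by
  rw [rstep_eq hd]
  simp [Ne.symm (e'_ne_ep hf hG hd)]

lemma rstep_pinj : IsPInj n (rstep f) := by
  intro a b c ha hb
  have key : ∀ u, rstep f u = some c →
      (u = ep f ∧ f (e' f) = some c) ∨ (u ≠ e' f ∧ u ≠ ep f ∧ f u = some c) := by
    intro u hu
    by_cases h1 : u = ep f
    · left
      refine ⟨h1, ?_⟩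
      rw [h1, rstep_ep hf hG hd] at hu
      exact hu
    · by_cases h2 : u = e' f
      · rw [h2, rstep_e' hf hG hd] at hu
        exact absurd hu (by simp)
      · right
        refine ⟨h2, h1, ?_⟩
        rw [rstep_agree hf hG hd h2 h1] at hu
        exact hu
  rcases key a ha with ⟨h1, h2⟩ | ⟨h1, h2, h3⟩ <;>
    rcases key b hb with ⟨g1, g2⟩ | ⟨g1, g2, g3⟩
  · rw [h1, g1]
  · exact absurd (hf b (e' f) c g3 h2) g1
  · exact absurd (hf a (e' f) c h3 g2) h1
  · exact hf a b c h3 g3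

lemma iter_rstep_path {i : ℕ} (hi : i ≤ i0 f) :
    iterMap n (rstep f) i 0 = iterMap n f i 0 := by
  refine iter_congr f (rstep f) 0 (i0 f) ?_ i hi
  intro j hj w hw
  have hw1 : w ≠ e' f := by
    intro h
    exact path_inj (hexG hG) hj hw (h ▸ e'_spec hf hG hd)
  have hw2 : w ≠ ep f := by
    intro h
    exact path_inj (hexG hG) (lt_trans hj (i0_lt hf hG hd)) hw (h ▸ ep_spec (hexG hG))
  exact rstep_agree hf hG hd hw1 hw2

lemma iter_rstep_none : iterMap n (rstep f) (i0 f + 1) 0 = none := by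
  rw [iter_succ_r, iter_rstep_path hf hG hd (le_refl _), e'_spec hf hG hd]
  show rstep f (e' f) = none
  exact rstep_e' hf hG hd

lemma pl_rstep : pl (rstep f) = i0 f + 1 := by
  apply pl_eq _ (iter_rstep_none hf hG hd)
  intro i hi
  rw [iter_rstep_path hf hG hd (by omega)]
  obtain ⟨v, hv⟩ := pl_some (hexG hG) (i := i)
    (by have h1 := i0_lt hf hG hd; have := Tl_succ (hexG hG); omega)
  rw [hv]; rfl

lemma Tl_rstep : Tl (rstep f) = i0 f := by
  rw [Tl, pl_rstep hf hG hd]; omega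

lemma ep_rstep : ep (rstep f) = e' f := by
  rw [ep, Tl_rstep hf hG hd, iter_rstep_path hf hG hd (le_refl _),
    e'_spec hf hG hd]
  rfl

lemma iter_shift {l : ℕ} :
    iterMap n f (i0 f + 1 + l) 0 = iterMap n f l (sN f) := by
  rw [iter_add, sN_spec hf hG hd]; rfl

lemma iter_rstep_seg {l : ℕ} (hl : l ≤ Tl f - i0 f - 1) :
    iterMap n (rstep f) l (sN f) = iterMap n f (i0 f + 1 + l) 0 := by
  have h1 : iterMap n f l (sN f) = iterMap n f (i0 f + 1 + l) 0 :=
    (iter_shift hf hG hd).symm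
  rw [← h1]
  refine iter_congr f (rstep f) (sN f) (Tl f - i0 f - 1) ?_ l hl
  intro j hj w hw
  rw [← iter_shift hf hG hd] at hw
  have hjT : i0 f + 1 + j < Tl f := by
    have := i0_lt hf hG hd; omega
  have hw1 : w ≠ e' f := by
    intro h
    exact path_inj (hexG hG) (show i0 f < i0 f + 1 + j by omega)
      (e'_spec hf hG hd) (h ▸ hw)
  have hw2 : w ≠ ep f := by
    intro h
    exact path_inj (hexG hG) hjT hw (h ▸ ep_spec (hexG hG))
  exact rstep_agree hf hG hd hw1 hw2

lemma iter_rstep_E :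
    iterMap n (rstep f) (Tl f - i0 f - 1) (sN f) = some (ep f) := by
  rw [iter_rstep_seg hf hG hd (le_refl _)]
  have h1 : i0 f + 1 + (Tl f - i0 f - 1) = Tl f := by
    have := i0_lt hf hG hd; omega
  rw [h1]; exact ep_spec (hexG hG)

lemma iter_rstep_cycle :
    iterMap n (rstep f) (Tl f - i0 f) (sN f) = some (sN f) := by
  have h1 : Tl f - i0 f = (Tl f - i0 f - 1) + 1 := by
    have := i0_lt hf hG hd; omega
  rw [h1, iter_succ_r, iter_rstep_E hf hG hd]
  show rstep f (ep f) = some (sN f)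
  rw [rstep_ep hf hG hd, f_e' hf hG hd]

lemma cyc_rstep_sN : cyc (rstep f) (sN f) :=
  ⟨Tl f - i0 f, by have := i0_lt hf hG hd; omega, iter_rstep_cycle hf hG hd⟩

lemma cyc_rstep_E : cyc (rstep f) (ep f) :=
  cyc_iter (rstep f) (cyc_rstep_sN hf hG hd) (iter_rstep_E hf hG hd)

lemma orbitE : ∀ l, ∃ j, i0 f < j ∧ j ≤ Tl f ∧
    iterMap n (rstep f) l (ep f) = iterMap n f j 0 := by
  intro l
  induction l with
  | zero =>
      exact ⟨Tl f, i0_lt hf hG hd, le_refl _, by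
        rw [iter_zero, ep_spec (hexG hG)]⟩
  | succ l ih =>
      obtain ⟨j, hj1, hj2, hl⟩ := ih
      obtain ⟨u, hu⟩ := pl_some (hexG hG) (i := j)
        (by have := Tl_succ (hexG hG); omega)
      rcases eq_or_lt_of_le hj2 with hjT | hjT
      · refine ⟨i0 f + 1, by omega, by have := i0_lt hf hG hd; omega, ?_⟩
        rw [iter_succ_r, hl, hu]
        have huE : u = ep f := by
          rw [hjT] at hu
          rw [ep_spec (hexG hG)] at hu
          exact Option.some.inj hu.symm
        show rstep f u = iterMap n f (i0 f + 1) 0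
        rw [huE, rstep_ep hf hG hd, f_e' hf hG hd, sN_spec hf hG hd]
      · refine ⟨j + 1, by omega, by omega, ?_⟩
        rw [iter_succ_r, hl, hu]
        have hw1 : u ≠ e' f := by
          intro h
          exact path_inj (hexG hG) hj1 (e'_spec hf hG hd) (h ▸ hu)
        have hw2 : u ≠ ep f := by
          intro h
          exact path_inj (hexG hG) hjT hu (h ▸ ep_spec (hexG hG))
        show rstep f u = iterMap n f (j + 1) 0
        rw [rstep_agree hf hG hd hw1 hw2, iter_succ_r, hu]
        rfl

lemma cyc_rstep_imp {x : Fin n} (hx : cyc (rstep f) x) :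
    cyc f x ∨ (∃ j, i0 f < j ∧ j ≤ Tl f ∧ iterMap n f j 0 = some x) := by
  by_cases hE : ∃ l, iterMap n (rstep f) l x = some (ep f)
  · right
    obtain ⟨l, hl⟩ := hE
    obtain ⟨p, hp, hit⟩ := hx
    have hq : iterMap n (rstep f) ((l + 1) * p) x = some x :=
      iter_mult (rstep f) hit (l + 1)
    have hlp : l ≤ (l + 1) * p := by nlinarith
    have h2 : iterMap n (rstep f) ((l + 1) * p) x
        = iterMap n (rstep f) ((l + 1) * p - l) (ep f) := by
      conv_lhs => rw [show (l+1)*p = l + ((l+1)*p - l) by omega]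
      rw [iter_add, hl]
      rfl
    obtain ⟨j, hj1, hj2, hj3⟩ := orbitE hf hG hd ((l + 1) * p - l)
    refine ⟨j, hj1, hj2, ?_⟩
    rw [← hj3, ← h2, hq]
  · left
    push_neg at hE
    have hne' : ∀ l, iterMap n (rstep f) l x ≠ some (e' f) := by
      intro l hl
      have hc : cyc (rstep f) (e' f) := cyc_iter (rstep f) hx hl
      have := cyc_fsome (rstep f) hc
      rw [rstep_e' hf hG hd] at this
      simp at this
    obtain ⟨p, hp, hit⟩ := hx
    have heq : iterMap n f p x = iterMap n (rstep f) p x := by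
      refine iter_congr (rstep f) f x p ?_ p (le_refl _)
      intro i hi w hw
      have hw1 : w ≠ e' f := fun h => hne' i (h ▸ hw)
      have hw2 : w ≠ ep f := fun h => hE i (h ▸ hw)
      exact (rstep_agree hf hG hd hw1 hw2).symm
    exact ⟨p, hp, heq.trans hit⟩

lemma i0_pos_of_dom_rstep (hds : (rstep f 0).isSome) : 0 < i0 f := by
  rcases Nat.eq_zero_or_pos (i0 f) with h0 | h0
  · have he0 : e' f = 0 := by
      have h := e'_spec hf hG hd
      rw [h0, iter_zero] at h
      exact (Option.some.inj h).symm
    rw [← he0, rstep_e' hf hG hd] at hds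
    simp at hds
  · exact h0

lemma good_rstep : Good (rstep f) := by
  refine ⟨⟨i0 f + 1, iter_rstep_none hf hG hd⟩, ?_⟩
  intro hds x hx
  have hp : 0 < i0 f := i0_pos_of_dom_rstep hf hG hd hds
  have hEe : ep f < e' f := ep_lt_e' hf hG hd hp
  rw [ep_rstep hf hG hd]
  rcases cyc_rstep_imp hf hG hd hx with hc | ⟨j, hj1, hj2, hj3⟩
  · exact lt_trans (hG.2 hd x hc) hEe
  · rcases eq_or_lt_of_le hj2 with hjT | hjT
    · have : x = ep f := by
        rw [hjT] at hj3
        rw [ep_spec (hexG hG)] at hj3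
        exact (Option.some.inj hj3).symm
      rw [this]; exact hEe
    · exact lt_of_le_of_lt (seg_le hf hG hd hj1 hjT hj3) hEe

lemma hC_rstep : (cycF (rstep f)).Nonempty :=
  ⟨ep f, (mem_cycF _ _).mpr (cyc_rstep_E hf hG hd)⟩

lemma mx_rstep : mx (rstep f) = ep f := by
  have hC' := hC_rstep hf hG hd
  refine le_antisymm ?_ (mx_max hC' (cyc_rstep_E hf hG hd))
  have hmx := mx_cyc hC' (f := rstep f)
  rcases cyc_rstep_imp hf hG hd hmx with hc | ⟨j, hj1, hj2, hj3⟩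
  · exact le_of_lt (hG.2 hd _ hc)
  · rcases eq_or_lt_of_le hj2 with hjT | hjT
    · rw [hjT] at hj3
      rw [ep_spec (hexG hG)] at hj3
      exact le_of_eq (Option.some.inj hj3).symm
    · exact seg_le hf hG hd hj1 hjT hj3

lemma step_rstep : step (rstep f) = f := by
  rw [step_eq (rstep_pinj hf hG hd) (good_rstep hf hG hd) (hC_rstep hf hG hd),
    ep_rstep hf hG hd, mx_rstep hf hG hd]
  funext x
  by_cases h1 : x = e' f
  · rw [if_pos h1, h1, rstep_ep hf hG hd, f_e' hf hG hd,
      (f_e' hf hG hd).symm]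
  · rw [if_neg h1]
    by_cases h2 : x = ep f
    · rw [if_pos h2, h2, f_ep (hexG hG)]
    · rw [if_neg h2, rstep_agree hf hG hd h1 h2]

end RStepA


section Globals
variable {n : ℕ} [NeZero n]

def GoodP (f : Fin n → Option (Fin n)) : Prop := IsPInj n f ∧ Good f

lemma step_id {f : Fin n → Option (Fin n)} (h : ¬(cycF f).Nonempty) :
    step f = f := if_neg h

lemma rstep_id {f : Fin n → Option (Fin n)} (h : ¬(f 0).isSome) :
    rstep f = f := if_neg h

lemma not_cyc_zero {f : Fin n → Option (Fin n)} (hG : Good f) : ¬ cyc f 0 :=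
  path_not_cyc hG.1 (iter_zero f 0)

lemma cycF_card_le {f : Fin n → Option (Fin n)} (hG : Good f) :
    (cycF f).card ≤ n - 1 := by
  have hsub : cycF f ⊆ Finset.univ.erase 0 := by
    intro x hx
    rw [mem_cycF] at hx
    rw [Finset.mem_erase]
    exact ⟨fun h => not_cyc_zero hG (h ▸ hx), Finset.mem_univ x⟩
  have := Finset.card_le_card hsub
  rwa [Finset.card_erase_of_mem (Finset.mem_univ _), Finset.card_univ,
    Fintype.card_fin] at this

lemma GoodP_step {f : Fin n → Option (Fin n)} (hg : GoodP f) : GoodP (step f) := by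
  by_cases hC : (cycF f).Nonempty
  · exact ⟨step_pinj hg.1 hg.2 hC, good_step hg.1 hg.2 hC⟩
  · rw [step_id hC]; exact hg

lemma GoodP_rstep {f : Fin n → Option (Fin n)} (hg : GoodP f) : GoodP (rstep f) := by
  by_cases hd : (f 0).isSome
  · exact ⟨rstep_pinj hg.1 hg.2 hd, good_rstep hg.1 hg.2 hd⟩
  · rw [rstep_id hd]; exact hg

lemma GoodP_stepIter {f : Fin n → Option (Fin n)} (hg : GoodP f) (k : ℕ) :
    GoodP (step^[k] f) := by
  induction k with
  | zero => exact hg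
  | succ k ih => rw [Function.iterate_succ_apply']; exact GoodP_step ih

lemma GoodP_rstepIter {f : Fin n → Option (Fin n)} (hg : GoodP f) (k : ℕ) :
    GoodP (rstep^[k] f) := by
  induction k with
  | zero => exact hg
  | succ k ih => rw [Function.iterate_succ_apply']; exact GoodP_rstep ih

lemma F_term : ∀ k (f : Fin n → Option (Fin n)), GoodP f →
    (cycF f).card ≤ k → ¬ (cycF (step^[k] f)).Nonempty := by
  intro k
  induction k with
  | zero =>
      intro f hg hc
      rw [Function.iterate_zero_apply]
      rw [Nat.le_zero, Finset.card_eq_zero] at hc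
      rw [hc]
      exact Finset.not_nonempty_empty
  | succ k ih =>
      intro f hg hc
      by_cases hC : (cycF f).Nonempty
      · rw [Function.iterate_succ_apply]
        exact ih (step f) (GoodP_step hg)
          (by have := cycF_step_lt hg.1 hg.2 hC; omega)
      · rw [Function.iterate_fixed (step_id hC) (k+1)]
        exact hC

lemma G_term : ∀ k (f : Fin n → Option (Fin n)), GoodP f →
    pl f ≤ k + 1 → ¬ ((rstep^[k] f) 0).isSome := by
  intro k
  induction k with
  | zero =>
      intro f hg hc
      rw [Function.iterate_zero_apply]
      have h1 : pl f = 1 := le_antisymm hc (pl_pos hg.2.1)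
      have h2 := pl_none hg.2.1
      rw [h1, iter_one] at h2
      rw [h2]; simp
  | succ k ih =>
      intro f hg hc
      by_cases hd : (f 0).isSome
      · rw [Function.iterate_succ_apply]
        apply ih (rstep f) (GoodP_rstep hg)
        rw [pl_rstep hg.1 hg.2 hd]
        have h1 := i0_lt hg.1 hg.2 hd
        unfold Tl at h1
        omega
      · rw [Function.iterate_fixed (rstep_id hd) (k+1)]
        exact hd

lemma F_stab {f : Fin n → Option (Fin n)} (hg : GoodP f) {a b : ℕ}
    (ha : (cycF f).card ≤ a) (hab : a ≤ b) : step^[b] f = step^[a] f := by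
  rw [show b = (b - a) + a by omega, Function.iterate_add_apply]
  exact Function.iterate_fixed (step_id (F_term a f hg ha)) _

lemma G_stab {f : Fin n → Option (Fin n)} (hg : GoodP f) {a b : ℕ}
    (ha : pl f ≤ a + 1) (hab : a ≤ b) : rstep^[b] f = rstep^[a] f := by
  rw [show b = (b - a) + a by omega, Function.iterate_add_apply]
  exact Function.iterate_fixed (rstep_id (G_term a f hg ha)) _

lemma main1 : ∀ k (f : Fin n → Option (Fin n)), GoodP f →
    (cycF f).card ≤ k → rstep^[n] (step^[n] f) = rstep^[n] f := by
  intro k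
  induction k with
  | zero =>
      intro f hg hc
      rw [Nat.le_zero, Finset.card_eq_zero] at hc
      have hC : ¬ (cycF f).Nonempty := by rw [hc]; exact Finset.not_nonempty_empty
      rw [Function.iterate_fixed (step_id hC) n]
  | succ k ih =>
      intro f hg hc
      by_cases hC : (cycF f).Nonempty
      · have hn1 : n - 1 + 1 = n := by have := NeZero.pos n; omega
        have hcard : (cycF (step f)).card ≤ n - 1 := by
          have h1 := cycF_step_lt hg.1 hg.2 hC
          have h2 := cycF_card_le hg.2
          omega
        have hsF : step^[n] f = step^[n-1] (step f) := by
          have h := Function.iterate_succ_apply step (n-1) f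
          rwa [show (n-1).succ = n from hn1] at h
        have h1 : step^[n] f = step^[n] (step f) := by
          rw [hsF]
          exact (F_stab (GoodP_step hg) hcard (by omega)).symm
        rw [h1, ih (step f) (GoodP_step hg)
          (by have := cycF_step_lt hg.1 hg.2 hC; omega)]
        have h2 : rstep^[n] (step f) = rstep^[n-1] f := by
          have h := Function.iterate_succ_apply rstep (n-1) (step f)
          rw [show (n-1).succ = n from hn1] at h
          rw [h, rstep_step hg.1 hg.2 hC]
        rw [h2]
        exact (G_stab hg (by have := pl_le_n hg.2.1; omega) (by omega)).symm
      · rw [Function.iterate_fixed (step_id hC) n]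

lemma main2 : ∀ k (f : Fin n → Option (Fin n)), GoodP f →
    pl f ≤ k + 1 → step^[n] (rstep^[n] f) = step^[n] f := by
  intro k
  induction k with
  | zero =>
      intro f hg hc
      have h1 : pl f = 1 := le_antisymm hc (pl_pos hg.2.1)
      have h2 := pl_none hg.2.1
      rw [h1, iter_one] at h2
      have hd : ¬ (f 0).isSome := by rw [h2]; simp
      rw [Function.iterate_fixed (rstep_id hd) n]
  | succ k ih =>
      intro f hg hc
      by_cases hd : (f 0).isSome
      · have hn1 : n - 1 + 1 = n := by have := NeZero.pos n; omega
        have hple : pl (rstep f) ≤ n - 1 + 1 := by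
          rw [pl_rstep hg.1 hg.2 hd]
          have h1 := i0_lt hg.1 hg.2 hd
          have h2 := pl_le_n hg.2.1
          unfold Tl at h1
          omega
        have hsG : rstep^[n] f = rstep^[n-1] (rstep f) := by
          have h := Function.iterate_succ_apply rstep (n-1) f
          rwa [show (n-1).succ = n from hn1] at h
        have h1 : rstep^[n] f = rstep^[n] (rstep f) := by
          rw [hsG]
          exact (G_stab (GoodP_rstep hg) hple (by omega)).symm
        rw [h1, ih (rstep f) (GoodP_rstep hg)
          (by rw [pl_rstep hg.1 hg.2 hd]
              have h1 := i0_lt hg.1 hg.2 hd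
              unfold Tl at h1
              omega)]
        have h2 : step^[n] (rstep f) = step^[n-1] f := by
          have h := Function.iterate_succ_apply step (n-1) (rstep f)
          rw [show (n-1).succ = n from hn1] at h
          rw [h, step_rstep hg.1 hg.2 hd]
        rw [h2]
        exact (F_stab hg (cycF_card_le hg.2) (by omega)).symm
      · rw [Function.iterate_fixed (rstep_id hd) n]

end Globals

end Aux

namespace Aux
section Final
variable {n : ℕ} [NeZero n]

lemma nocyc_nilp {f : Fin n → Option (Fin n)} (hnc : ∀ x : Fin n, ¬ cyc f x) :
    ∀ x, iterMap n f n x = none := by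
  intro x
  cases hv : iterMap n f n x with
  | none => rfl
  | some v =>
      exfalso
      have hlt : n < n := path_lt_n x n
        (fun i hi => iter_some_of_le f hi hv)
        (fun i hi w hw => hnc w)
      omega

lemma goodA (α : PInj n) (hα : α.val 0 = none) : GoodP α.val := by
  refine ⟨α.2, ⟨1, by rw [iter_one]; exact hα⟩, fun hds => ?_⟩
  rw [hα] at hds; simp at hds

lemma goodN (α : PInj n) (hα : Nilpotent n α) : GoodP α.val := by
  obtain ⟨k, hk, hall⟩ := hα
  refine ⟨α.2, ⟨k, hall 0⟩, fun hds x hx => ?_⟩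
  obtain ⟨v, hv⟩ := cyc_some α.val hx k
  rw [hall x] at hv
  exact absurd hv (by simp)

lemma nilpN (α : PInj n) (hα : Nilpotent n α) : ∀ x, ¬ cyc α.val x := by
  obtain ⟨k, hk, hall⟩ := hα
  exact fun x hx => not_cyc_of_none α.val (hall x) hx

end Final
end Aux

theorem stmt11 (n : ℕ) (h : 0 < n) :
    Set.ncard {α : PInj n | α.val ⟨0, h⟩ = none}
      = Set.ncard {α : PInj n | Nilpotent n α} := by
  haveI : NeZero n := ⟨h.ne'⟩
  have hz0 : (⟨0, h⟩ : Fin n) = 0 := by ext; simp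
  have cardle : ∀ f : Fin n → Option (Fin n), (Aux.cycF f).card ≤ n :=
    fun f => le_trans (Finset.card_le_univ _) (by simp)
  have e : {α : PInj n | α.val ⟨0, h⟩ = none} ≃ {α : PInj n | Nilpotent n α} := by
    refine ⟨fun a => ⟨⟨Aux.step^[n] a.1.val, ?_⟩, ?_⟩,
      fun b => ⟨⟨Aux.rstep^[n] b.1.val, ?_⟩, ?_⟩, ?_, ?_⟩
    · have ha : a.1.val 0 = none := by rw [← hz0]; exact a.2
      exact (Aux.GoodP_stepIter (Aux.goodA a.1 ha) n).1
    · have ha : a.1.val 0 = none := by rw [← hz0]; exact a.2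
      have hg := Aux.goodA a.1 ha
      have hnc := Aux.F_term n a.1.val hg (cardle _)
      refine ⟨n, h, Aux.nocyc_nilp (fun x hx => hnc ⟨x, (Aux.mem_cycF _ x).mpr hx⟩)⟩
    · have hb : Nilpotent n b.1 := b.2
      exact (Aux.GoodP_rstepIter (Aux.goodN b.1 hb) n).1
    · have hb : Nilpotent n b.1 := b.2
      have hg := Aux.goodN b.1 hb
      have hd := Aux.G_term n b.1.val hg (by have := Aux.pl_le_n hg.2.1; omega)
      show (Aux.rstep^[n] b.1.val) ⟨0, h⟩ = none
      rw [hz0]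
      exact Option.not_isSome_iff_eq_none.mp hd
    · intro a
      apply Subtype.ext
      apply Subtype.ext
      show Aux.rstep^[n] (Aux.step^[n] a.1.val) = a.1.val
      have ha : a.1.val 0 = none := by rw [← hz0]; exact a.2
      have hg := Aux.goodA a.1 ha
      rw [Aux.main1 n a.1.val hg (cardle _)]
      exact Function.iterate_fixed (Aux.rstep_id (by rw [ha]; simp)) n
    · intro b
      apply Subtype.ext
      apply Subtype.ext
      show Aux.step^[n] (Aux.rstep^[n] b.1.val) = b.1.val
      have hb : Nilpotent n b.1 := b.2
      have hg := Aux.goodN b.1 hb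
      rw [Aux.main2 n b.1.val hg (by have := Aux.pl_le_n hg.2.1; omega)]
      have hC : ¬ (Aux.cycF b.1.val).Nonempty := by
        rintro ⟨x, hx⟩
        exact Aux.nilpN b.1 hb x ((Aux.mem_cycF _ x).mp hx)
      exact Function.iterate_fixed (Aux.step_id hC) n
  rw [← Nat.card_coe_set_eq, ← Nat.card_coe_set_eq]
  exact Nat.card_congr e
end

section
/- The number of nilpotent elements of IS_n equals the number of partial injective maps from {2,3,...,n} to {1,2,...,n}. -/
/-- Partial injective maps from `Fin a` to `Fin b`. -/
def PInj2 (a b : ℕ) := {f : Fin a → Option (Fin b) // ∀ x y c, f x = some c → f y = some c → x = y}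


namespace NilpAux

variable {n : ℕ} {f g : Fin n → Option (Fin n)} {x y z : Fin n}

theorem iter_add (f : Fin n → Option (Fin n)) (a b : ℕ) (x : Fin n) :
    iterMap n f (a + b) x = (iterMap n f a x).bind (iterMap n f b) := by
  induction a generalizing x with
  | zero => simp [iterMap]
  | succ a ih =>
    have : a + 1 + b = (a + b) + 1 := by omega
    rw [this]
    show (f x).bind (iterMap n f (a + b)) = ((f x).bind (iterMap n f a)).bind (iterMap n f b)
    cases hf : f x with
    | none => simp
    | some y => simp [ih]

theorem iter_one (f : Fin n → Option (Fin n)) (x : Fin n) : iterMap n f 1 x = f x := by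
  show (f x).bind (iterMap n f 0) = f x
  cases f x <;> simp [iterMap]

theorem iter_succ' (f : Fin n → Option (Fin n)) (k : ℕ) (x : Fin n) :
    iterMap n f (k + 1) x = (iterMap n f k x).bind f := by
  rw [iter_add f k 1]
  cases iterMap n f k x <;> simp [iter_one]

/-- `x` is a periodic point of `f`. -/
def Per (f : Fin n → Option (Fin n)) (x : Fin n) : Prop :=
  ∃ k, 0 < k ∧ iterMap n f k x = some x

theorem per_mul (h : iterMap n f k x = some x) (q : ℕ) : iterMap n f (k * q) x = some x := by
  induction q with
  | zero => simp [iterMap]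
  | succ q ih =>
    have : k * (q + 1) = k * q + k := by ring
    rw [this, iter_add, ih]
    simpa using h

theorem per_isSome (h : Per f x) (m : ℕ) : (iterMap n f m x).isSome := by
  obtain ⟨k, hk, hx⟩ := h
  have h1 : iterMap n f (k * m) x = some x := per_mul hx m
  have hle : m ≤ k * m := Nat.le_mul_of_pos_left m hk
  have := iter_add f m (k * m - m) x
  rw [Nat.add_sub_cancel' hle] at this
  rw [h1] at this
  cases hm : iterMap n f m x with
  | none => rw [hm] at this; simp at this
  | some y => simp

theorem per_iterMap (h : Per f x) (hj : iterMap n f j x = some v) : Per f v := by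
  obtain ⟨k, hk, hx⟩ := h
  refine ⟨k, hk, ?_⟩
  have h1 : iterMap n f (j + k) x = iterMap n f k v := by
    rw [iter_add, hj]; simp
  have h2 : iterMap n f (k + j) x = some v := by
    rw [iter_add, hx]; simpa using hj
  rw [Nat.add_comm] at h2
  rw [← h1, h2]

theorem per_step (h : Per f x) : ∃ y, f x = some y ∧ Per f y := by
  have h1 : iterMap n f 1 x = f x := iter_one f x
  have := per_isSome h 1
  rw [h1] at this
  obtain ⟨y, hy⟩ := Option.isSome_iff_exists.mp this
  exact ⟨y, hy, per_iterMap h (by rw [h1, hy])⟩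

theorem per_pre (h : Per f y) : ∃ x, Per f x ∧ f x = some y := by
  obtain ⟨k, hk, hy⟩ := h
  obtain ⟨j, rfl⟩ : ∃ j, k = j + 1 := ⟨k - 1, by omega⟩
  rw [iter_succ'] at hy
  cases hj : iterMap n f j y with
  | none => rw [hj] at hy; simp at hy
  | some x =>
    rw [hj] at hy; simp at hy
    refine ⟨x, ⟨j + 1, by omega, ?_⟩, hy⟩
    have hy1 : iterMap n f (j + 1) y = some y := by
      rw [iter_succ', hj]; simpa using hy
    have ha : iterMap n f (j + 1 + j) y = some x := by
      rw [iter_add, hy1]; simpa using hj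
    have hb : iterMap n f (j + (j + 1)) y = iterMap n f (j + 1) x := by
      rw [iter_add, hj]; simp
    rw [show j + 1 + j = j + (j + 1) from by omega, hb] at ha
    exact ha

theorem per_of_iter_eq (hij : i < j) (hi : iterMap n f i x = some z)
    (hj : iterMap n f j x = some z) : Per f z := by
  refine ⟨j - i, by omega, ?_⟩
  have := iter_add f i (j - i) x
  rw [Nat.add_sub_cancel' (le_of_lt hij)] at this
  rw [hj, hi] at this
  simpa using this.symm

theorem iter_none_of_acyclic (hf : ∀ z, ¬ Per f z) (x : Fin n) : iterMap n f n x = none := by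
  by_contra h
  have hsome : ∀ i ≤ n, (iterMap n f i x).isSome := by
    intro i hi
    have := iter_add f i (n - i) x
    rw [Nat.add_sub_cancel' hi] at this
    cases hx : iterMap n f i x with
    | none => rw [hx] at this; simp at this; exact absurd this h
    | some y => simp
  have : ∀ i : Fin (n + 1), ∃ y, iterMap n f i.val x = some y := by
    intro i
    exact Option.isSome_iff_exists.mp (hsome i.val (by omega))
  choose gg hgg using this
  obtain ⟨i, j, hne, heq⟩ := Fintype.exists_ne_map_eq_of_card_lt gg (by simp)
  rcases Nat.lt_or_ge i.val j.val with hlt | hge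
  · exact hf _ (per_of_iter_eq hlt (hgg i) (heq ▸ hgg j))
  · have hlt : j.val < i.val := by
      rcases Nat.lt_or_ge j.val i.val with h1 | h1
      · exact h1
      · exact absurd (Fin.ext (by omega)) hne
    exact hf _ (per_of_iter_eq hlt (hgg j) (heq ▸ hgg i))

theorem not_per_of_none (h : f x = none) : ¬ Per f x := by
  intro hp
  have := per_isSome hp 1
  rw [iter_one, h] at this
  simp at this

/-- changing `f` off the visited points doesn't change iterates -/
theorem iter_congr (m : ℕ)
    (h : ∀ j < m, ∀ v, iterMap n f j x = some v → f v = g v) :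
    iterMap n f m x = iterMap n g m x := by
  induction m with
  | zero => rfl
  | succ m ih =>
    have h1 : iterMap n f m x = iterMap n g m x :=
      ih (fun j hj v hv => h j (by omega) v hv)
    rw [iter_succ', iter_succ', ← h1]
    cases hv : iterMap n f m x with
    | none => simp
    | some v => simp [h m (by omega) v hv]


/-- forward orbit list -/
def orbit (f : Fin n → Option (Fin n)) : ℕ → Fin n → List (Fin n)
  | 0, _ => []
  | k + 1, x =>
    match f x with
    | none => []
    | some y => y :: orbit f k y

theorem orbit_getElem : ∀ (k : ℕ) (x : Fin n) (i : ℕ) (h : i < (orbit f k x).length),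
    iterMap n f (i + 1) x = some ((orbit f k x)[i])
  | 0, x, i, h => by simp [orbit] at h
  | k + 1, x, i, h => by
    rcases hf : f x with _ | y
    · simp [orbit, hf] at h
    · have horb : orbit f (k + 1) x = y :: orbit f k y := by simp [orbit, hf]
      rcases i with _ | i
      · rw [iter_one, hf]
        simp [horb]
      · have h' : i < (orbit f k y).length := by
          rw [horb] at h; simpa using h
        have : iterMap n f (i + 1 + 1) x = iterMap n f (i + 1) y := by
          rw [show i + 1 + 1 = 1 + (i + 1) from by omega, iter_add, iter_one, hf]
          simp
        rw [this, orbit_getElem k y i h']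
        congr 1
        simp [horb]

theorem orbit_none : ∀ (k : ℕ) (x : Fin n), (orbit f k x).length < k →
    iterMap n f ((orbit f k x).length + 1) x = none
  | 0, x, h => by simp at h
  | k + 1, x, h => by
    rcases hf : f x with _ | y
    · simp [orbit, hf, iter_one, hf]
    · have horb : orbit f (k + 1) x = y :: orbit f k y := by simp [orbit, hf]
      rw [horb] at h ⊢
      simp only [List.length_cons]
      have h' : (orbit f k y).length < k := by simpa using h
      have : iterMap n f ((orbit f k y).length + 1 + 1) x
          = iterMap n f ((orbit f k y).length + 1) y := by
        rw [show (orbit f k y).length + 1 + 1 = 1 + ((orbit f k y).length + 1) from by omega,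
          iter_add, iter_one, hf]
        simp
      rw [this, orbit_none k y h']

theorem orbit_nodup (hf : ∀ z, ¬ Per f z) (k : ℕ) (x : Fin n) : (orbit f k x).Nodup := by
  rw [List.nodup_iff_injective_get]
  intro i j hij
  by_contra hne
  have hij' : (orbit f k x)[i.val] = (orbit f k x)[j.val] := by
    simpa [List.get_eq_getElem] using hij
  have hne' : i.val ≠ j.val := fun h => hne (Fin.ext h)
  rcases Nat.lt_or_ge i.val j.val with hlt | hge
  · exact hf _ (per_of_iter_eq (show i.val + 1 < j.val + 1 from by omega)
      (orbit_getElem k x i.val i.isLt)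
      (by rw [orbit_getElem k x j.val j.isLt, hij']))
  · have hlt : j.val < i.val := by omega
    exact hf _ (per_of_iter_eq (show j.val + 1 < i.val + 1 from by omega)
      (orbit_getElem k x j.val j.isLt)
      (by rw [orbit_getElem k x i.val i.isLt, hij']))

theorem not_mem_orbit (hf : ∀ z, ¬ Per f z) (k : ℕ) (x : Fin n) : x ∉ orbit f k x := by
  intro hx
  obtain ⟨i, hi, hget⟩ := List.mem_iff_getElem.mp hx
  exact hf x ⟨i + 1, by omega, by rw [orbit_getElem k x i hi, hget]⟩

theorem mem_orbit_iff {k : ℕ} {x y : Fin n} :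
    y ∈ orbit f k x ↔ ∃ i, i < (orbit f k x).length ∧ iterMap n f (i + 1) x = some y := by
  constructor
  · intro hy
    obtain ⟨i, hi, hget⟩ := List.mem_iff_getElem.mp hy
    exact ⟨i, hi, by rw [orbit_getElem k x i hi, hget]⟩
  · rintro ⟨i, hi, hit⟩
    have := orbit_getElem k x i hi
    rw [this] at hit
    exact (Option.some_inj.mp hit) ▸ List.getElem_mem hi


/-! ### list successor / association helpers -/

def nextIn : List (Fin n) → Fin n → Option (Fin n)
  | [], _ => none
  | a :: l, x => if x = a then l[0]? else nextIn l x

theorem nextIn_getElem : ∀ (l : List (Fin n)), l.Nodup → ∀ i (h : i < l.length),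
    nextIn l l[i] = l[i + 1]?
  | [], _, i, h => by simp at h
  | a :: l, hnd, 0, h => by simp [nextIn]
  | a :: l, hnd, i + 1, h => by
    have hi : i < l.length := by simpa using h
    have hne : l[i] ≠ a := by
      intro hEq
      exact (List.nodup_cons.mp hnd).1 (hEq ▸ List.getElem_mem hi)
    show nextIn (a :: l) l[i] = _
    rw [show nextIn (a :: l) l[i] = nextIn l l[i] from by simp [nextIn, hne],
      nextIn_getElem l (List.nodup_cons.mp hnd).2 i hi]
    simp

def assocOpt : List (Fin n) → List (Fin n) → Fin n → Option (Fin n)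
  | a :: s, b :: l, x => if x = a then some b else assocOpt s l x
  | _, _, _ => none

theorem assocOpt_getElem : ∀ (s l : List (Fin n)), s.Nodup → ∀ i (hi : i < s.length)
    (hi' : i < l.length), assocOpt s l s[i] = some l[i]
  | [], _, _, i, hi, hi' => by simp at hi
  | a :: s, [], _, i, hi, hi' => by simp at hi'
  | a :: s, b :: l, hnd, 0, hi, hi' => by simp [assocOpt]
  | a :: s, b :: l, hnd, i + 1, hi, hi' => by
    have hi2 : i < s.length := by simpa using hi
    have hne : s[i] ≠ a := by
      intro hEq
      exact (List.nodup_cons.mp hnd).1 (hEq ▸ List.getElem_mem hi2)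
    show assocOpt (a :: s) (b :: l) s[i] = _
    rw [show assocOpt (a :: s) (b :: l) s[i] = assocOpt s l s[i] from by simp [assocOpt, hne],
      assocOpt_getElem s l (List.nodup_cons.mp hnd).2 i hi2 (by simpa using hi')]
    simp

theorem assocOpt_mem : ∀ (s l : List (Fin n)) (x c : Fin n),
    assocOpt s l x = some c → c ∈ l
  | [], l, x, c, h => by simp [assocOpt] at h
  | a :: s, [], x, c, h => by simp [assocOpt] at h
  | a :: s, b :: l, x, c, h => by
    by_cases hx : x = a
    · simp [assocOpt, hx] at h
      simp [h]
    · have : assocOpt s l x = some c := by simpa [assocOpt, hx] using h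
      exact List.mem_cons_of_mem _ (assocOpt_mem s l x c this)

/-! ### the two surgeries -/

/-- replace the cycles of the base map `g` by the chain `e → L₀ → L₁ → ⋯`. -/
def buildA (e : Fin n) (L : List (Fin n)) (g : Fin n → Option (Fin n)) :
    Fin n → Option (Fin n) := fun x =>
  if x = e then L[0]? else if x ∈ L then nextIn L x else g x

/-- replace the chain of `e` by cycles: `sᵢ ↦ Lᵢ` on the sorted support `s`. -/
def buildE (e : Fin n) (s L : List (Fin n)) (g : Fin n → Option (Fin n)) :
    Fin n → Option (Fin n) := fun x =>
  if x ∈ s then assocOpt s L x else if x = e then none else g x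


/-! ### buildA lemmas -/

section BuildA

variable {e : Fin n} {L : List (Fin n)} {g : Fin n → Option (Fin n)}

theorem buildA_getElem (hnd : L.Nodup) (he : e ∉ L) {i : ℕ} (h : i < L.length) :
    buildA e L g L[i] = L[i + 1]? := by
  have h1 : L[i] ≠ e := fun hEq => he (hEq ▸ List.getElem_mem h)
  have h2 : L[i] ∈ L := List.getElem_mem h
  simp only [buildA, if_neg h1, if_pos h2]
  exact nextIn_getElem L hnd i h

theorem buildA_climb (hnd : L.Nodup) (he : e ∉ L) :
    ∀ (j i : ℕ) (h : i < L.length), iterMap n (buildA e L g) j L[i] = L[i + j]?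
  | 0, i, h => by simp [iterMap, List.getElem?_eq_getElem h]
  | j + 1, i, h => by
    show (buildA e L g L[i]).bind _ = _
    rw [buildA_getElem hnd he h]
    by_cases h2 : i + 1 < L.length
    · rw [List.getElem?_eq_getElem h2]
      show iterMap n (buildA e L g) j L[i+1] = _
      rw [buildA_climb hnd he j (i+1) h2]
      congr 1
      omega
    · rw [List.getElem?_eq_none (by omega)]
      rw [List.getElem?_eq_none (by omega)]
      rfl

theorem buildA_iter_e (hnd : L.Nodup) (he : e ∉ L) (j : ℕ) :
    iterMap n (buildA e L g) (j + 1) e = L[j]? := by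
  show (buildA e L g e).bind _ = _
  rw [show buildA e L g e = L[0]? from if_pos rfl]
  by_cases h0 : 0 < L.length
  · rw [List.getElem?_eq_getElem h0]
    show iterMap n (buildA e L g) j L[0] = _
    rw [buildA_climb hnd he j 0 h0]
    congr 1
    omega
  · rw [List.getElem?_eq_none (by omega), List.getElem?_eq_none (by omega)]
    rfl

theorem buildA_not_per_mem (hnd : L.Nodup) (he : e ∉ L) {x : Fin n} (hx : x ∈ L) :
    ¬ Per (buildA e L g) x := by
  obtain ⟨i, hi, rfl⟩ := List.mem_iff_getElem.mp hx
  rintro ⟨k, hk, hper⟩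
  rw [buildA_climb hnd he k i hi] at hper
  have : i + k < L.length := by
    by_contra hcon
    rw [List.getElem?_eq_none (by omega)] at hper
    exact Option.some_ne_none _ hper.symm
  rw [List.getElem?_eq_getElem this] at hper
  have := (List.Nodup.getElem_inj_iff hnd).mp (Option.some_inj.mp hper)
  omega

theorem buildA_not_per_e (hnd : L.Nodup) (he : e ∉ L) : ¬ Per (buildA e L g) e := by
  intro hp
  obtain ⟨y, hy, hpy⟩ := per_step hp
  rw [show buildA e L g e = L[0]? from if_pos rfl] at hy
  by_cases h0 : 0 < L.length
  · rw [List.getElem?_eq_getElem h0] at hy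
    exact buildA_not_per_mem hnd he ((Option.some_inj.mp hy) ▸ List.getElem_mem h0) hpy
  · rw [List.getElem?_eq_none (by omega)] at hy
    exact Option.some_ne_none _ hy.symm

theorem buildA_acyclic (hnd : L.Nodup) (he : e ∉ L)
    (hstay : ∀ x c, x ∉ L → x ≠ e → g x = some c → c ∉ L)
    (hgac : ∀ x, x ∉ L → ¬ Per g x) :
    ∀ z, ¬ Per (buildA e L g) z := by
  intro z hp
  by_cases hzL : z ∈ L
  · exact buildA_not_per_mem hnd he hzL hp
  by_cases hze : z = e
  · exact buildA_not_per_e hnd he (hze ▸ hp)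
  obtain ⟨k, hk, hper⟩ := hp
  by_cases hex : ∃ j v, j < k ∧ iterMap n (buildA e L g) j z = some v ∧ (v ∈ L ∨ v = e)
  · obtain ⟨j, v, _, hjv, hv⟩ := hex
    have hpv : Per (buildA e L g) v := per_iterMap ⟨k, hk, hper⟩ hjv
    rcases hv with hv | rfl
    · exact buildA_not_per_mem hnd he hv hpv
    · exact buildA_not_per_e hnd he hpv
  · push_neg at hex
    have hcong : iterMap n (buildA e L g) k z = iterMap n g k z := by
      apply iter_congr
      intro j hj v hv
      obtain ⟨hvL, hve⟩ := hex j v hj hv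
      simp [buildA, hve, hvL]
    exact hgac z hzL ⟨k, hk, by rw [← hcong]; exact hper⟩

theorem buildA_isPInj (hnd : L.Nodup) (he : e ∉ L)
    (hstay : ∀ x c, x ∉ L → x ≠ e → g x = some c → c ∉ L)
    (hg : ∀ a b c, g a = some c → g b = some c → a = b) :
    IsPInj n (buildA e L g) := by
  have key : ∀ a c, buildA e L g a = some c →
      (a = e ∧ ∃ (h0 : 0 < L.length), c = L[0]) ∨
      (∃ i, ∃ h : i + 1 < L.length, a = L[i] ∧ c = L[i+1]) ∨
      (a ∉ L ∧ a ≠ e ∧ g a = some c ∧ c ∉ L) := by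
    intro a c hac
    by_cases hae : a = e
    · subst hae
      rw [show buildA a L g a = L[0]? from if_pos rfl] at hac
      by_cases h0 : 0 < L.length
      · rw [List.getElem?_eq_getElem h0] at hac
        exact Or.inl ⟨rfl, h0, (Option.some_inj.mp hac).symm⟩
      · rw [List.getElem?_eq_none (by omega)] at hac
        exact (Option.some_ne_none _ hac.symm).elim
    by_cases haL : a ∈ L
    · obtain ⟨i, hi, rfl⟩ := List.mem_iff_getElem.mp haL
      rw [buildA_getElem hnd he hi] at hac
      by_cases h1 : i + 1 < L.length
      · rw [List.getElem?_eq_getElem h1] at hac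
        exact Or.inr (Or.inl ⟨i, h1, rfl, (Option.some_inj.mp hac).symm⟩)
      · rw [List.getElem?_eq_none (by omega)] at hac
        exact (Option.some_ne_none _ hac.symm).elim
    · have : g a = some c := by simpa [buildA, hae, haL] using hac
      exact Or.inr (Or.inr ⟨haL, hae, this, hstay a c haL hae this⟩)
  intro a b c hac hbc
  rcases key a c hac with ⟨hae, h0, hc⟩ | ⟨i, hi, ha, hc⟩ | ⟨haL, hae, hga, hcL⟩ <;>
    rcases key b c hbc with ⟨hbe, h0', hc'⟩ | ⟨i', hi', hb', hc''⟩ | ⟨hbL, hbe, hgb, hcL'⟩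
  · exact hae.trans hbe.symm
  · exfalso
    have h9 : (0 : ℕ) = i' + 1 := (List.Nodup.getElem_inj_iff hnd).mp (hc ▸ hc'' : _)
    omega
  · exact absurd (hc ▸ List.getElem_mem h0) hcL'
  · exfalso
    have h9 : i + 1 = (0 : ℕ) := (List.Nodup.getElem_inj_iff hnd).mp (hc ▸ hc' : _)
    omega
  · have h9 : i + 1 = i' + 1 := (List.Nodup.getElem_inj_iff hnd).mp (hc ▸ hc'' : _)
    rw [ha, hb']
    congr 1
    omega
  · exact absurd (hc ▸ List.getElem_mem (show i + 1 < L.length from hi)) hcL'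
  · exact absurd (hc' ▸ List.getElem_mem h0') hcL
  · exact absurd (hc'' ▸ List.getElem_mem (show i' + 1 < L.length from hi')) hcL
  · exact hg a b c hga hgb

theorem buildA_drop (hnd : L.Nodup) (he : e ∉ L) :
    ∀ (fuel i : ℕ) (h : i < L.length), L.length - (i + 1) ≤ fuel →
      orbit (buildA e L g) fuel L[i] = L.drop (i + 1)
  | 0, i, h, hfuel => by
    rw [List.drop_eq_nil_of_le (by omega)]
    rfl
  | fuel + 1, i, h, hfuel => by
    show (match buildA e L g L[i] with
      | none => []
      | some y => y :: orbit (buildA e L g) fuel y) = _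
    rw [buildA_getElem hnd he h]
    by_cases h2 : i + 1 < L.length
    · rw [List.getElem?_eq_getElem h2]
      show L[i+1] :: orbit (buildA e L g) fuel L[i+1] = _
      rw [buildA_drop hnd he fuel (i+1) h2 (by omega)]
      rw [List.drop_eq_getElem_cons h2]
    · rw [List.getElem?_eq_none (by omega)]
      rw [List.drop_eq_nil_of_le (by omega)]

theorem buildA_orbit_e (hnd : L.Nodup) (he : e ∉ L) (fuel : ℕ) (h0 : 0 < fuel)
    (hlen : L.length ≤ fuel) : orbit (buildA e L g) fuel e = L := by
  obtain ⟨f', rfl⟩ : ∃ f', fuel = f' + 1 := ⟨fuel - 1, by omega⟩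
  show (match buildA e L g e with
    | none => []
    | some y => y :: orbit (buildA e L g) f' y) = _
  rw [show buildA e L g e = L[0]? from if_pos rfl]
  by_cases h0' : 0 < L.length
  · rw [List.getElem?_eq_getElem h0']
    show L[0] :: orbit (buildA e L g) f' L[0] = _
    rw [buildA_drop hnd he f' 0 h0' (by omega)]
    exact (List.drop_eq_getElem_cons h0').symm.trans (by simp)
  · rw [List.getElem?_eq_none (by omega)]
    have : L = [] := List.eq_nil_of_length_eq_zero (by omega)
    simp [this]

end BuildA


/-! ### injective cancellation -/

theorem per_cancel (hf : IsPInj n f) {x : Fin n} :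
    ∀ (i j : ℕ), i < j → (∀ m, m ≤ j → (iterMap n f m x).isSome) →
      iterMap n f i x = iterMap n f j x → Per f x
  | 0, j, hij, hsome, heq => ⟨j, hij, heq.symm⟩
  | i + 1, j, hij, hsome, heq => by
    obtain ⟨j', rfl⟩ : ∃ j', j = j' + 1 := ⟨j - 1, by omega⟩
    obtain ⟨u, hu⟩ := Option.isSome_iff_exists.mp (hsome i (by omega))
    obtain ⟨v, hv⟩ := Option.isSome_iff_exists.mp (hsome j' (by omega))
    obtain ⟨w, hw⟩ := Option.isSome_iff_exists.mp (hsome (i + 1) (by omega))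
    have h1 : f u = some w := by
      have := iter_succ' f i x
      rw [hu, hw] at this
      simpa using this.symm
    have h2 : f v = some w := by
      have := iter_succ' f j' x
      rw [hv, ← heq, hw] at this
      simpa using this.symm
    have huv : u = v := hf u v w h1 h2
    exact per_cancel hf i j' (by omega) (fun m hm => hsome m (by omega))
      (by rw [hu, hv, huv])

/-! ### buildE lemmas -/

section BuildE

variable {e : Fin n} {s L : List (Fin n)} {g : Fin n → Option (Fin n)}

theorem buildE_getElem (hsnd : s.Nodup) (hlen : s.length = L.length)
    {i : ℕ} (hi : i < s.length) : buildE e s L g s[i] = some L[i] := by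
  simp only [buildE, if_pos (List.getElem_mem hi)]
  exact assocOpt_getElem s L hsnd i hi (hlen ▸ hi)

theorem buildE_e (hes : e ∉ s) : buildE e s L g e = none := by
  simp [buildE, hes]

theorem buildE_isPInj (hsnd : s.Nodup) (hlnd : L.Nodup) (hlen : s.length = L.length)
    (hstayE : ∀ a c, a ∉ s → a ≠ e → g a = some c → c ∉ L)
    (hg : ∀ a b c, g a = some c → g b = some c → a = b) :
    IsPInj n (buildE e s L g) := by
  have key : ∀ a c, buildE e s L g a = some c →
      (∃ i, ∃ hi : i < s.length, a = s[i] ∧ c = L[i]) ∨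
      (a ∉ s ∧ a ≠ e ∧ g a = some c ∧ c ∉ L) := by
    intro a c hac
    by_cases has : a ∈ s
    · obtain ⟨i, hi, rfl⟩ := List.mem_iff_getElem.mp has
      rw [buildE_getElem hsnd hlen hi] at hac
      exact Or.inl ⟨i, hi, rfl, (Option.some_inj.mp hac).symm⟩
    · by_cases hae : a = e
      · rw [hae, buildE_e (hae ▸ has)] at hac
        exact (Option.some_ne_none _ hac.symm).elim
      · have : g a = some c := by simpa [buildE, has, hae] using hac
        exact Or.inr ⟨has, hae, this, hstayE a c has hae this⟩
  intro a b c hac hbc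
  rcases key a c hac with ⟨i, hi, ha, hc⟩ | ⟨has, hae, hga, hcL⟩ <;>
    rcases key b c hbc with ⟨i', hi', hb, hc'⟩ | ⟨hbs, hbe, hgb, hcL'⟩
  · have h9 : i = i' := (List.Nodup.getElem_inj_iff hlnd).mp (hc ▸ hc' : _)
    rw [ha, hb]
    congr 1
  · exact absurd (hc ▸ List.getElem_mem (hlen ▸ hi)) hcL'
  · exact absurd (hc' ▸ List.getElem_mem (hlen ▸ hi')) hcL
  · exact hg a b c hga hgb

theorem buildE_invariant (hsnd : s.Nodup) (hlen : s.length = L.length)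
    (hsl : ∀ x, x ∈ s ↔ x ∈ L) :
    ∀ (m : ℕ) (x : Fin n), x ∈ s →
      ∃ y, iterMap n (buildE e s L g) m x = some y ∧ y ∈ s
  | 0, x, hx => ⟨x, rfl, hx⟩
  | m + 1, x, hx => by
    obtain ⟨i, hi, rfl⟩ := List.mem_iff_getElem.mp hx
    have hstep : buildE e s L g s[i] = some L[i] := buildE_getElem hsnd hlen hi
    have hLs : L[i] ∈ s := (hsl _).mpr (List.getElem_mem (hlen ▸ hi))
    obtain ⟨y, hy, hys⟩ := buildE_invariant hsnd hlen hsl m L[i] hLs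
    refine ⟨y, ?_, hys⟩
    show (buildE e s L g s[i]).bind _ = some y
    rw [hstep]
    simpa using hy

theorem buildE_per_of_mem (hsnd : s.Nodup) (hlnd : L.Nodup) (hlen : s.length = L.length)
    (hsl : ∀ x, x ∈ s ↔ x ∈ L)
    (hinj : IsPInj n (buildE e s L g)) {x : Fin n} (hx : x ∈ s) :
    Per (buildE e s L g) x := by
  have hsome : ∀ m, (iterMap n (buildE e s L g) m x).isSome := by
    intro m
    obtain ⟨y, hy, -⟩ := buildE_invariant hsnd hlen hsl m x hx
    rw [hy]; rfl
  have : ∀ i : Fin (n + 1), ∃ y, iterMap n (buildE e s L g) i.val x = some y :=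
    fun i => Option.isSome_iff_exists.mp (hsome i.val)
  choose gg hgg using this
  obtain ⟨i, j, hne, heq⟩ := Fintype.exists_ne_map_eq_of_card_lt gg (by simp)
  have hne' : i.val ≠ j.val := fun h => hne (Fin.ext h)
  rcases Nat.lt_or_ge i.val j.val with hlt | hge
  · exact per_cancel hinj i.val j.val hlt (fun m _ => hsome m)
      (by rw [hgg i, hgg j, heq])
  · exact per_cancel hinj j.val i.val (by omega) (fun m _ => hsome m)
      (by rw [hgg i, hgg j, heq])

theorem buildE_not_per (hsnd : s.Nodup) (hlen : s.length = L.length)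
    (hsl : ∀ x, x ∈ s ↔ x ∈ L) (hes : e ∉ s)
    (hgac : ∀ z, z ∉ s → z ≠ e → ¬ Per g z) {x : Fin n} (hx : x ∉ s) :
    ¬ Per (buildE e s L g) x := by
  intro hp
  by_cases hxe : x = e
  · exact not_per_of_none (buildE_e hes) (hxe ▸ hp)
  obtain ⟨k, hk, hper⟩ := hp
  by_cases hex : ∃ j v, j < k ∧ iterMap n (buildE e s L g) j x = some v ∧ (v ∈ s ∨ v = e)
  · obtain ⟨j, v, hj, hjv, hv⟩ := hex
    rcases hv with hv | rfl
    · -- reach back into x ∈ s : contradiction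
      have hN : iterMap n (buildE e s L g) (k * (j + 1)) x = some x := per_mul hper (j + 1)
      have hle : j ≤ k * (j + 1) := by nlinarith
      have hsplit := iter_add (buildE e s L g) j (k * (j + 1) - j) x
      rw [Nat.add_sub_cancel' hle, hN, hjv] at hsplit
      obtain ⟨y, hy, hys⟩ := buildE_invariant (e := e) (g := g) hsnd hlen hsl (k * (j + 1) - j) v hv
      simp only [Option.bind_some] at hsplit
      rw [hy] at hsplit
      simp at hsplit
      exact hx (hsplit ▸ hys)
    · exact not_per_of_none (buildE_e hes) (per_iterMap ⟨k, hk, hper⟩ hjv)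
  · push_neg at hex
    have hcong : iterMap n (buildE e s L g) k x = iterMap n g k x := by
      apply iter_congr
      intro j hj v hv
      obtain ⟨hvs, hve⟩ := hex j v hj hv
      simp [buildE, hvs, hve]
    exact hgac x hx hxe ⟨k, hk, by rw [← hcong]; exact hper⟩

end BuildE

/-! ### chain lemmas for an acyclic injective map -/

section Chain

variable {f : Fin n → Option (Fin n)} {e : Fin n}

theorem orbit_length_lt (hac : ∀ z, ¬ Per f z) (e : Fin n) : (orbit f n e).length < n := by
  have hnd : (orbit f n e).Nodup := orbit_nodup hac n e
  have he : e ∉ orbit f n e := not_mem_orbit hac n e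
  have hsub : (orbit f n e).toFinset ⊆ Finset.univ.erase e := by
    intro x hx
    refine Finset.mem_erase.mpr ⟨?_, Finset.mem_univ x⟩
    intro hEq
    subst hEq
    exact he (List.mem_toFinset.mp hx)
  have h1 : (orbit f n e).toFinset.card ≤ (Finset.univ.erase e).card :=
    Finset.card_le_card hsub
  rw [List.toFinset_card_of_nodup hnd] at h1
  rw [Finset.card_erase_of_mem (Finset.mem_univ e)] at h1
  have h2 : (Finset.univ : Finset (Fin n)).card = n := by simp
  have h3 : 0 < n := e.pos
  omega

theorem chain_e (hac : ∀ z, ¬ Per f z) : f e = (orbit f n e)[0]? := by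
  rw [← iter_one f e]
  by_cases h0 : 0 < (orbit f n e).length
  · rw [orbit_getElem n e 0 h0, List.getElem?_eq_getElem h0]
  · have h1 : (orbit f n e).length = 0 := by omega
    have := orbit_none (f := f) n e (by rw [h1]; exact e.pos)
    rw [h1] at this
    rw [this, List.getElem?_eq_none (by omega)]

theorem chain_step (hac : ∀ z, ¬ Per f z) {i : ℕ} (h : i < (orbit f n e).length) :
    f (orbit f n e)[i] = (orbit f n e)[i + 1]? := by
  have h2 : iterMap n f (i + 2) e = (iterMap n f (i + 1) e).bind f := iter_succ' f (i + 1) e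
  rw [orbit_getElem n e i h] at h2
  simp only [Option.bind_some] at h2
  rw [← h2]
  by_cases h3 : i + 1 < (orbit f n e).length
  · rw [orbit_getElem n e (i + 1) h3, List.getElem?_eq_getElem h3]
  · have hlt := orbit_length_lt hac e
    have h4 : (orbit f n e).length = i + 1 := by omega
    have := orbit_none (f := f) n e (by omega)
    rw [h4] at this
    rw [this, List.getElem?_eq_none (by omega)]

theorem chain_pre (hinj : IsPInj n f) (hac : ∀ z, ¬ Per f z) {b c : Fin n}
    (hb : f b = some c) (hc : c ∈ orbit f n e) : b = e ∨ b ∈ orbit f n e := by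
  obtain ⟨j, hj, rfl⟩ := List.mem_iff_getElem.mp hc
  rcases j with _ | j'
  · left
    have h1 : f e = some (orbit f n e)[0] := by
      rw [chain_e hac, List.getElem?_eq_getElem hj]
    exact hinj b e _ hb h1
  · right
    have h1 : f (orbit f n e)[j'] = some (orbit f n e)[j' + 1] := by
      rw [chain_step hac (by omega), List.getElem?_eq_getElem hj]
    exact (hinj b _ _ hb h1) ▸ List.getElem_mem (show j' < _ by omega)

end Chain


/-! ### the periodic-part list of a map -/

section PerList

open Classical in
noncomputable def perSort (f : Fin n → Option (Fin n)) : List (Fin n) :=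
  (Finset.univ.filter (fun x => Per f x)).sort (· ≤ ·)

noncomputable def perList (f : Fin n → Option (Fin n)) : List (Fin n) :=
  (perSort f).map (fun x => (f x).getD x)

variable {f : Fin n → Option (Fin n)}

theorem mem_perSort {x : Fin n} : x ∈ perSort f ↔ Per f x := by
  unfold perSort
  rw [Finset.mem_sort]
  simp

theorem perSort_nodup : (perSort f).Nodup := Finset.sort_nodup _ _

theorem perSort_some {x : Fin n} (hx : x ∈ perSort f) : f x = some ((f x).getD x) := by
  have hp : Per f x := mem_perSort.mp hx
  have := per_isSome hp 1
  rw [iter_one] at this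
  obtain ⟨y, hy⟩ := Option.isSome_iff_exists.mp this
  rw [hy]
  rfl

theorem perList_length : (perList f).length = (perSort f).length := List.length_map _

theorem perList_getElem {i : ℕ} (hi : i < (perSort f).length) :
    f (perSort f)[i] = some ((perList f)[i]'(by exact perList_length ▸ hi)) := by
  have h1 : (perList f)[i]'(by exact perList_length ▸ hi)
      = ((f (perSort f)[i]).getD (perSort f)[i]) := List.getElem_map _
  rw [h1]
  exact perSort_some (List.getElem_mem hi)

theorem mem_perList {x : Fin n} : x ∈ perList f ↔ Per f x := by
  constructor
  · intro hx
    obtain ⟨y, hy, hxy⟩ := List.mem_map.mp hx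
    have hpy : Per f y := mem_perSort.mp hy
    obtain ⟨z, hz, hpz⟩ := per_step hpy
    have : (f y).getD y = z := by rw [hz]; rfl
    rw [← hxy, this]
    exact hpz
  · intro hp
    obtain ⟨z, hpz, hz⟩ := per_pre hp
    have hzs : z ∈ perSort f := mem_perSort.mpr hpz
    have : (f z).getD z = x := by rw [hz]; rfl
    exact this ▸ List.mem_map_of_mem hzs

theorem perList_nodup (hinj : IsPInj n f) : (perList f).Nodup := by
  apply List.Nodup.map_on _ perSort_nodup
  intro a ha b hb hEq
  exact hinj a b _ (by rw [perSort_some ha, hEq]) (perSort_some hb)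

end PerList


/-! ### encode / decode -/

section Surgery

variable {e : Fin n} {f : Fin n → Option (Fin n)}

noncomputable def encode (e : Fin n) (f : Fin n → Option (Fin n)) : Fin n → Option (Fin n) :=
  buildE e ((orbit f n e).toFinset.sort (· ≤ ·)) (orbit f n e) f

noncomputable def decode (e : Fin n) (f : Fin n → Option (Fin n)) : Fin n → Option (Fin n) :=
  buildA e (perList f) f

-- encode-side abbreviations
theorem enc_hsl (hac : ∀ z, ¬ Per f z) :
    ∀ x, x ∈ (orbit f n e).toFinset.sort (· ≤ ·) ↔ x ∈ orbit f n e := by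
  intro x
  rw [Finset.mem_sort, List.mem_toFinset]

theorem enc_hlen (hac : ∀ z, ¬ Per f z) :
    ((orbit f n e).toFinset.sort (· ≤ ·)).length = (orbit f n e).length := by
  rw [Finset.length_sort, List.toFinset_card_of_nodup (orbit_nodup hac n e)]

theorem enc_hes (hac : ∀ z, ¬ Per f z) : e ∉ (orbit f n e).toFinset.sort (· ≤ ·) := by
  rw [enc_hsl hac]
  exact not_mem_orbit hac n e

theorem enc_hstay (hinj : IsPInj n f) (hac : ∀ z, ¬ Per f z) :
    ∀ a c, a ∉ (orbit f n e).toFinset.sort (· ≤ ·) → a ≠ e → f a = some c →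
      c ∉ orbit f n e := by
  intro a c has hae hfc hc
  rcases chain_pre hinj hac hfc hc with rfl | haL
  · exact hae rfl
  · exact has ((enc_hsl hac a).mpr haL)

theorem encode_isPInj (hinj : IsPInj n f) (hac : ∀ z, ¬ Per f z) :
    IsPInj n (encode e f) :=
  buildE_isPInj (Finset.sort_nodup _ _) (orbit_nodup hac n e) (enc_hlen hac)
    (enc_hstay hinj hac) hinj

theorem encode_e (hac : ∀ z, ¬ Per f z) : encode e f e = none :=
  buildE_e (enc_hes hac)

theorem encode_per_iff (hinj : IsPInj n f) (hac : ∀ z, ¬ Per f z) (x : Fin n) :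
    Per (encode e f) x ↔ x ∈ orbit f n e := by
  constructor
  · intro hp
    by_contra hx
    exact buildE_not_per (Finset.sort_nodup _ _) (enc_hlen hac) (enc_hsl hac)
      (enc_hes hac) (fun z _ _ => hac z) (fun hs => hx ((enc_hsl hac x).mp hs)) hp
  · intro hx
    exact buildE_per_of_mem (Finset.sort_nodup _ _) (orbit_nodup hac n e) (enc_hlen hac)
      (enc_hsl hac) (encode_isPInj hinj hac) ((enc_hsl hac x).mpr hx)

-- decode-side abbreviations
theorem dec_he (hnone : f e = none) : e ∉ perList f := by
  rw [mem_perList]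
  exact not_per_of_none hnone

theorem dec_hstay (hinj : IsPInj n f) :
    ∀ x c, x ∉ perList f → x ≠ e → f x = some c → c ∉ perList f := by
  intro x c hx _ hfc hc
  obtain ⟨z, hpz, hz⟩ := per_pre (mem_perList.mp hc)
  have : z = x := hinj z x c hz hfc
  exact hx (mem_perList.mpr (this ▸ hpz))

theorem decode_isPInj (hinj : IsPInj n f) (hnone : f e = none) :
    IsPInj n (decode e f) :=
  buildA_isPInj (perList_nodup hinj) (dec_he hnone) (dec_hstay hinj) hinj

theorem decode_acyclic (hinj : IsPInj n f) (hnone : f e = none) :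
    ∀ z, ¬ Per (decode e f) z :=
  buildA_acyclic (perList_nodup hinj) (dec_he hnone) (dec_hstay hinj)
    (fun x hx => fun hp => hx (mem_perList.mpr hp))

/-! ### round trips -/

theorem decode_encode (hinj : IsPInj n f) (hac : ∀ z, ¬ Per f z) :
    decode e (encode e f) = f := by
  set L := orbit f n e with hL
  set s := (orbit f n e).toFinset.sort (· ≤ ·) with hs
  have hFinj : IsPInj n (encode e f) := encode_isPInj hinj hac
  have hps : perSort (encode e f) = s := by
    unfold perSort
    rw [hs]
    congr 1
    ext x
    simp only [Finset.mem_filter, Finset.mem_univ, true_and, List.mem_toFinset]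
    exact encode_per_iff (e := e) hinj hac x
  have hpl : perList (encode e f) = L := by
    apply List.ext_getElem
    · rw [perList_length, hps, enc_hlen hac]
    · intro i h1 h2
      have hi : i < s.length := by rw [← hps]; exact perList_length ▸ h1
      have hi' : i < L.length := enc_hlen hac ▸ hi
      have hkey : encode e f s[i] = some L[i] :=
        buildE_getElem (Finset.sort_nodup _ _) (enc_hlen hac) hi
      have := perList_getElem (f := encode e f) (i := i) (by rw [hps]; exact hi)
      rw [show (perSort (encode e f))[i]'(by rw [hps]; exact hi) = s[i] from by
        congr 1] at this
      rw [hkey] at this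
      exact (Option.some_inj.mp this).symm
  show buildA e (perList (encode e f)) (encode e f) = f
  rw [hpl]
  funext x
  by_cases hxe : x = e
  · subst hxe
    rw [show buildA x L (encode x f) x = L[0]? from if_pos rfl]
    exact (chain_e hac).symm
  by_cases hxL : x ∈ L
  · obtain ⟨i, hi, rfl⟩ := List.mem_iff_getElem.mp hxL
    rw [buildA_getElem (orbit_nodup hac n e) (not_mem_orbit hac n e) hi]
    exact (chain_step hac hi).symm
  · have h1 : buildA e L (encode e f) x = encode e f x := by
      simp [buildA, hxe, hxL]
    rw [h1]
    have hxs : x ∉ s := fun hs' => hxL ((enc_hsl hac x).mp hs')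
    show buildE e s L f x = f x
    simp [buildE, hxs, hxe]

theorem encode_decode (hinj : IsPInj n f) (hnone : f e = none) :
    encode e (decode e f) = f := by
  set L := perList f with hLdef
  have hnd : L.Nodup := perList_nodup hinj
  have he : e ∉ L := dec_he hnone
  have horb : orbit (decode e f) n e = L := by
    apply buildA_orbit_e hnd he n e.pos
    calc L.length = L.toFinset.card := (List.toFinset_card_of_nodup hnd).symm
      _ ≤ (Finset.univ : Finset (Fin n)).card := Finset.card_le_card (Finset.subset_univ _)
      _ = n := by simp
  have hts : L.toFinset.sort (· ≤ ·) = perSort f := by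
    unfold perSort
    congr 1
    ext x
    simp only [List.mem_toFinset, Finset.mem_filter, Finset.mem_univ, true_and]
    exact mem_perList
  show buildE e ((orbit (decode e f) n e).toFinset.sort (· ≤ ·)) (orbit (decode e f) n e)
      (decode e f) = f
  rw [horb, hts]
  funext x
  by_cases hxs : x ∈ perSort f
  · obtain ⟨i, hi, rfl⟩ := List.mem_iff_getElem.mp hxs
    rw [buildE_getElem perSort_nodup (by rw [perList_length]) hi]
    exact (perList_getElem hi).symm
  by_cases hxe : x = e
  · subst hxe
    rw [buildE_e (fun hc => hxs hc)]
    exact hnone.symm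
  · have h1 : buildE e (perSort f) L (decode e f) x = decode e f x := by
      simp [buildE, hxs, hxe]
    rw [h1]
    have hxL : x ∉ L := fun hc => hxs (mem_perSort.mpr (mem_perList.mp hc))
    show buildA e L f x = f x
    simp [buildA, hxe, hxL]

end Surgery


/-! ### final assembly -/

theorem nilpotent_iff {α : PInj n} :
    Nilpotent n α ↔ ∀ z, ¬ Per α.val z := by
  constructor
  · rintro ⟨k, hk, hnil⟩ z hp
    have := per_isSome hp k
    rw [hnil z] at this
    simp at this
  · intro hac
    refine ⟨n + 1, by omega, fun x => ?_⟩
    show (α.val x).bind (iterMap n α.val n) = none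
    cases hx : α.val x with
    | none => rfl
    | some y => simpa using iter_none_of_acyclic hac y

noncomputable def equivA (e : Fin n) :
    {α : PInj n // Nilpotent n α} ≃
    {α : PInj n // α.val e = none} where
  toFun a := ⟨⟨encode e a.1.1, encode_isPInj a.1.2 (nilpotent_iff.mp a.2)⟩,
    encode_e (nilpotent_iff.mp a.2)⟩
  invFun b := ⟨⟨decode e b.1.1, decode_isPInj b.1.2 b.2⟩,
    nilpotent_iff.mpr (decode_acyclic b.1.2 b.2)⟩
  left_inv a := Subtype.ext (Subtype.ext (decode_encode a.1.2 (nilpotent_iff.mp a.2)))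
  right_inv b := Subtype.ext (Subtype.ext (encode_decode b.1.2 b.2))

def equivE (m : ℕ) :
    {α : PInj (m+1) // α.val (Fin.last m) = none} ≃
    PInj2 m (m+1) where
  toFun a := ⟨fun i => a.1.1 i.castSucc, by
    intro x y c hx hy
    have := a.1.2 x.castSucc y.castSucc c hx hy
    exact Fin.castSucc_inj.mp this⟩
  invFun b := ⟨⟨fun x => if h : x = Fin.last m then none else b.1 (x.castPred h), by
    intro x y c hx hy
    simp only [] at hx hy
    by_cases hxl : x = Fin.last m
    · rw [dif_pos hxl] at hx; exact (Option.some_ne_none _ hx.symm).elim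
    by_cases hyl : y = Fin.last m
    · rw [dif_pos hyl] at hy; exact (Option.some_ne_none _ hy.symm).elim
    rw [dif_neg hxl] at hx
    rw [dif_neg hyl] at hy
    have := b.2 _ _ c hx hy
    have h2 := congrArg Fin.castSucc this
    rwa [Fin.castSucc_castPred, Fin.castSucc_castPred] at h2⟩, by
    simp⟩
  left_inv a := by
    apply Subtype.ext
    apply Subtype.ext
    funext x
    by_cases hxl : x = Fin.last m
    · rw [show a.1.1 x = none from hxl ▸ a.2]
      simp [hxl]
    · simp only [dif_neg hxl]
      rw [Fin.castSucc_castPred]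
  right_inv b := by
    apply Subtype.ext
    funext i
    have h1 : i.castSucc ≠ Fin.last m := (Fin.castSucc_lt_last i).ne
    simp only [dif_neg h1]
    rw [Fin.castPred_castSucc]

def equivZero : PInj 0 ≃ PInj2 0 0 where
  toFun a := ⟨a.1, fun x => x.elim0⟩
  invFun b := ⟨b.1, fun x => x.elim0⟩
  left_inv a := rfl
  right_inv b := rfl

end NilpAux



theorem stmt13 (n : ℕ) :
    Set.ncard {α : PInj n | Nilpotent n α} = Nat.card (PInj2 (n - 1) n) := by
  rw [← Nat.card_coe_set_eq]
  cases n with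
  | zero =>
    apply Nat.card_congr
    exact (Equiv.subtypeUnivEquiv (fun α => ⟨1, one_pos, fun x => x.elim0⟩)).trans
      NilpAux.equivZero
  | succ m =>
    apply Nat.card_congr
    exact (NilpAux.equivA (Fin.last m)).trans (NilpAux.equivE m)
end
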